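/- arXiv:1708.03106 — 5 statements merged into one kernel-verified Lean document; each statement's English description precedes it below -/
import Mathlib

section
/- Let λ, μ be partitions of lengths r1, r2, and set n_1 = λ_1 + r1 − 1 if r1 ≥ 1 (n_1 = 0 if λ is empty) and m_1 = μ_1 + r2 − 1 if r2 ≥ 1 (m_1 = 0 if μ is empty). Let α ∈ ℝ satisfy: α ∉ {−1, −2, …, −max(n_1, m_1)}, and α ≠ −n_i − m_j − 1 for all i = 1,…,r1 and j = 1,…,r2. Then Ω_{λ,μ}^{(α)}(0) ≠ 0. -/
open scoped BigOperators

/-- The Laguerre polynomial `L_n^{(α)}` as a function on `ℝ`; it is `0` for `n < 0`. -/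
noncomputable def laguerre (α : ℝ) (n : ℤ) (x : ℝ) : ℝ :=
  if n < 0 then 0 else
    ∑ k ∈ Finset.range (n.toNat + 1),
      ((-1 : ℝ) ^ k / (Nat.factorial k : ℝ)) *
        ((∏ i ∈ Finset.Icc (k + 1) n.toNat, (α + (i : ℝ))) / (Nat.factorial (n.toNat - k) : ℝ)) *
        x ^ k

/-- The Wronskian `Wr[f_1, …, f_r](x) = det (f_i^{(j-1)}(x))`. -/
noncomputable def Wr {r : ℕ} (f : Fin r → ℝ → ℝ) (x : ℝ) : ℝ :=
  Matrix.det (Matrix.of fun i j : Fin r => iteratedDeriv (j : ℕ) (f i) x)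

/-- A partition: a weakly decreasing finite sequence of positive integers,
encoded by its length `len` and a function `part` giving the parts (0-indexed). -/
structure PartitionSeq where
  len : ℕ
  part : ℕ → ℕ
  pos : ∀ i, i < len → 1 ≤ part i
  antitone : ∀ i j, i ≤ j → j < len → part j ≤ part i

/-- The size `|λ|` of a partition. -/
def PartitionSeq.size (p : PartitionSeq) : ℕ := ∑ i ∈ Finset.range p.len, p.part i

/-- The degree sequence `n_j = λ_j + r1 − j` (0-indexed: `n_i = λ_{i+1} + r1 − 1 − i`). -/
def PartitionSeq.deg (p : PartitionSeq) (i : ℕ) : ℕ := p.part i + (p.len - 1 - i)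

/-- The generalized Laguerre polynomial `Ω_{λ,μ}^{(α)}` as a function on `ℝ`. -/
noncomputable def genLagFun (α : ℝ) (lam mu : PartitionSeq) (x : ℝ) : ℝ :=
  Real.exp (-(mu.len : ℝ) * x) *
    Wr (fun i : Fin (lam.len + mu.len) => fun y =>
      if (i : ℕ) < lam.len then laguerre α (lam.deg (i : ℕ)) y
      else Real.exp y * laguerre α (mu.deg ((i : ℕ) - lam.len)) (-y)) x

/-- The degree sequence `ℕ_{λ,μ}`. -/
def degSeq (lam mu : PartitionSeq) : Set ℕ :=
  {n : ℕ | (lam.size : ℤ) + mu.size - lam.len ≤ (n : ℤ) ∧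
    ∀ j, j < lam.len → (n : ℤ) - lam.size - mu.size ≠ (lam.part j : ℤ) - (j + 1)}

/-- The exceptional Laguerre polynomial `L_{λ,μ,n}^{(α)}` as a function on `ℝ`. -/
noncomputable def excLagFun (α : ℝ) (lam mu : PartitionSeq) (n : ℕ) (x : ℝ) : ℝ :=
  Real.exp (-(mu.len : ℝ) * x) *
    Wr (fun i : Fin (lam.len + mu.len + 1) => fun y =>
      if (i : ℕ) < lam.len then laguerre α (lam.deg (i : ℕ)) y
      else if (i : ℕ) < lam.len + mu.len then
        Real.exp y * laguerre α (mu.deg ((i : ℕ) - lam.len)) (-y)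
      else laguerre α ((n : ℤ) - lam.size - mu.size + lam.len) y) x

open Polynomial Finset

/-- shift lemma for products -/
lemma prod_shift (β : ℝ) (a b c : ℕ) :
    ∏ i ∈ Finset.Icc a b, (β + (c : ℝ) + (i : ℝ)) =
      ∏ i ∈ Finset.Icc (a + c) (b + c), (β + (i : ℝ)) := by
  rw [← Finset.map_add_right_Icc a b c, Finset.prod_map]
  apply Finset.prod_congr rfl
  intro i _
  simp only [addRightEmbedding_apply]
  push_cast
  ring

noncomputable def lagPoly (α : ℝ) (n : ℤ) : Polynomial ℝ :=
  if n < 0 then 0 else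
    ∑ k ∈ Finset.range (n.toNat + 1),
      Polynomial.C ((-1 : ℝ) ^ k / (Nat.factorial k : ℝ) *
        ((∏ i ∈ Finset.Icc (k + 1) n.toNat, (α + (i : ℝ))) / (Nat.factorial (n.toNat - k) : ℝ)))
        * Polynomial.X ^ k

lemma laguerre_eq (α : ℝ) (n : ℤ) (x : ℝ) : laguerre α n x = (lagPoly α n).eval x := by
  unfold laguerre lagPoly
  split
  · simp
  · simp [eval_finset_sum, mul_assoc]

lemma lagPoly_derivative (α : ℝ) (n : ℤ) :
    (lagPoly α n).derivative = -lagPoly (α + 1) (n - 1) := by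
  rcases lt_trichotomy n 0 with hn | hn | hn
  · rw [lagPoly, if_pos hn, lagPoly, if_pos (by omega)]
    simp
  · subst hn
    rw [lagPoly, if_neg (by omega), lagPoly, if_pos (by omega)]
    simp
  · have hN : n.toNat = (n - 1).toNat + 1 := by omega
    rw [lagPoly, if_neg (by omega), lagPoly, if_neg (by omega)]
    set N := (n - 1).toNat with hNdef
    rw [hN, derivative_sum]
    rw [Finset.sum_range_succ' (fun k => Polynomial.derivative
      (Polynomial.C ((-1 : ℝ) ^ k / (Nat.factorial k : ℝ) *
        ((∏ i ∈ Finset.Icc (k + 1) (N+1), (α + (i : ℝ))) / (Nat.factorial ((N+1) - k) : ℝ)))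
        * Polynomial.X ^ k)) (N+1)]
    simp only [derivative_C_mul, derivative_X_pow, pow_zero, derivative_one, mul_zero, add_zero]
    rw [← Finset.sum_neg_distrib]
    apply Finset.sum_congr rfl
    intro k hk
    simp only [Finset.mem_range] at hk
    have h1 : (N + 1) - (k + 1) = N - k := by omega
    have h2 : ∏ i ∈ Finset.Icc (k + 1 + 1) (N + 1), (α + (i : ℝ)) =
        ∏ i ∈ Finset.Icc (k + 1) N, (α + 1 + (i : ℝ)) := by
      have := prod_shift α (k+1) N 1
      simp only [Nat.cast_one] at this
      rw [← this]
    have h4 : k + 1 - 1 = k := by omega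
    rw [h1, h2, h4]
    rw [← mul_assoc, ← Polynomial.C_mul, neg_mul_eq_neg_mul, ← Polynomial.C_neg]
    congr 2
    have hf : ((k+1).factorial : ℝ) = (k+1) * k.factorial := by
      rw [Nat.factorial_succ]; push_cast; ring
    have hk0 : (k.factorial : ℝ) ≠ 0 := Nat.cast_ne_zero.mpr (Nat.factorial_ne_zero k)
    have hk1 : ((k+1:ℕ) : ℝ) ≠ 0 := by positivity
    rw [pow_succ, hf]
    push_cast
    field_simp

lemma lagPoly_eval_zero (α : ℝ) (n : ℤ) (hn : 0 ≤ n) :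
    (lagPoly α n).eval 0 =
      (∏ i ∈ Finset.Icc 1 n.toNat, (α + (i : ℝ))) / (Nat.factorial n.toNat : ℝ) := by
  rw [lagPoly, if_neg (by omega)]
  rw [eval_finset_sum]
  rw [Finset.sum_eq_single 0]
  · simp
  · intro k _ hk
    simp [zero_pow hk]
  · simp

lemma lagPoly_zero_of_neg (α : ℝ) (n : ℤ) (hn : n < 0) : lagPoly α n = 0 := by
  rw [lagPoly, if_pos hn]

lemma lagPoly_iterate (α : ℝ) (n : ℤ) (c : ℕ) :
    Polynomial.derivative^[c] (lagPoly α n) = (-1 : ℝ) ^ c • lagPoly (α + c) (n - c) := by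
  induction c with
  | zero => simp
  | succ c ih =>
    rw [Function.iterate_succ_apply', ih, Polynomial.derivative_smul, lagPoly_derivative]
    rw [show α + (c:ℝ) + 1 = α + ((c+1:ℕ):ℝ) by push_cast; ring]
    rw [show n - (c:ℤ) - 1 = n - ((c+1:ℕ):ℤ) by push_cast; ring]
    rw [pow_succ]
    rw [smul_neg, ← neg_smul]
    ring_nf

lemma iteratedDeriv_polyeval (c : ℕ) (p : Polynomial ℝ) :
    iteratedDeriv c (fun x => p.eval x) = fun x => (Polynomial.derivative^[c] p).eval x := by
  induction c with
  | zero => simp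
  | succ c ih =>
    rw [iteratedDeriv_succ, ih, Function.iterate_succ_apply']
    funext x
    exact Polynomial.deriv (𝕜 := ℝ) (p := Polynomial.derivative^[c] p) (x := x)

/-- Entry of the Wronskian matrix for the Laguerre rows. -/
lemma entryA (α : ℝ) (n c : ℕ) :
    iteratedDeriv c (laguerre α (n : ℤ)) 0 =
      if c ≤ n then
        (-1 : ℝ) ^ c * ((∏ i ∈ Finset.Icc (c + 1) n, (α + (i : ℝ))) /
          (Nat.factorial (n - c) : ℝ))
      else 0 := by
  have hfun : laguerre α (n : ℤ) = fun x => (lagPoly α n).eval x := by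
    funext x; exact laguerre_eq α n x
  rw [hfun, iteratedDeriv_polyeval, lagPoly_iterate]
  by_cases h : c ≤ n
  · rw [if_pos h]
    have h0 : (0:ℤ) ≤ (n:ℤ) - c := by omega
    simp only [Polynomial.eval_smul, smul_eq_mul]
    rw [lagPoly_eval_zero _ _ h0]
    have ht : ((n:ℤ) - c).toNat = n - c := by omega
    rw [ht]
    have hsh := prod_shift α 1 (n - c) c
    have hIcc : Finset.Icc (1 + c) (n - c + c) = Finset.Icc (c + 1) n := by
      congr 1 <;> omega
    rw [hIcc] at hsh
    rw [hsh]
  · rw [if_neg h]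
    rw [lagPoly_zero_of_neg _ _ (by omega)]
    simp

noncomputable def negLagPoly (α : ℝ) (m : ℤ) : Polynomial ℝ :=
  (lagPoly α m).comp (-Polynomial.X)

lemma negLagPoly_eval (α : ℝ) (m : ℤ) (x : ℝ) :
    (negLagPoly α m).eval x = laguerre α m (-x) := by
  rw [negLagPoly, Polynomial.eval_comp, laguerre_eq]
  simp

lemma negLagPoly_derivative (α : ℝ) (m : ℤ) :
    Polynomial.derivative (negLagPoly α m) = negLagPoly (α + 1) (m - 1) := by
  rw [negLagPoly, Polynomial.derivative_comp, lagPoly_derivative]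
  simp [negLagPoly]

/-- The operator `p ↦ p + p'`. -/
noncomputable def lagT (p : Polynomial ℝ) : Polynomial ℝ := p + Polynomial.derivative p

lemma lagT_add (p q : Polynomial ℝ) : lagT (p + q) = lagT p + lagT q := by
  simp [lagT]; ring

lemma lagT_iterate_add (c : ℕ) (p q : Polynomial ℝ) :
    lagT^[c] (p + q) = lagT^[c] p + lagT^[c] q := by
  induction c generalizing p q with
  | zero => simp
  | succ c ih => rw [Function.iterate_succ_apply, Function.iterate_succ_apply,
      Function.iterate_succ_apply, lagT_add, ih]

lemma iteratedDeriv_exp_mul (c : ℕ) (p : Polynomial ℝ) :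
    iteratedDeriv c (fun y => Real.exp y * p.eval y) =
      fun y => Real.exp y * (lagT^[c] p).eval y := by
  induction c with
  | zero => simp
  | succ c ih =>
    rw [iteratedDeriv_succ, ih, Function.iterate_succ_apply']
    funext y
    have h : HasDerivAt (fun y => Real.exp y * (lagT^[c] p).eval y)
        (Real.exp y * (lagT^[c] p).eval y + Real.exp y * (Polynomial.derivative (lagT^[c] p)).eval y)
        y := by
      have h1 := (Real.hasDerivAt_exp y).mul (Polynomial.hasDerivAt (lagT^[c] p) y)
      exact h1
      try ring
    rw [h.deriv, lagT]
    simp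
    ring

lemma Bval (c : ℕ) : ∀ (m : ℤ) (α : ℝ),
    (lagT^[c] (negLagPoly α m)).eval 0 =
      if m < 0 then 0 else
        (∏ i ∈ Finset.Icc (c + 1) (c + m.toNat), (α + (i : ℝ))) /
          (Nat.factorial m.toNat : ℝ) := by
  induction c with
  | zero =>
    intro m α
    rcases lt_or_ge m 0 with hm | hm
    · rw [if_pos hm]
      simp [negLagPoly, lagPoly_zero_of_neg _ _ hm]
    · rw [if_neg (by omega)]
      rw [Function.iterate_zero_apply, negLagPoly, Polynomial.eval_comp]
      simp only [Polynomial.eval_neg, Polynomial.eval_X, neg_zero]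
      rw [lagPoly_eval_zero _ _ hm]
      norm_num
  | succ c ih =>
    intro m α
    have hT : lagT (negLagPoly α m) = negLagPoly α m + negLagPoly (α + 1) (m - 1) := by
      rw [lagT, negLagPoly_derivative]
    rw [Function.iterate_succ_apply, hT, lagT_iterate_add, Polynomial.eval_add, ih, ih]
    rcases lt_trichotomy m 0 with hm | hm | hm
    · rw [if_pos hm, if_pos (by omega), if_pos hm]
      norm_num
    · subst hm
      rw [if_neg (by omega), if_pos (by omega), if_neg (by omega)]
      simp
    · -- m ≥ 1
      rw [if_neg (by omega), if_neg (by omega), if_neg (by omega)]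
      set M := m.toNat with hM
      have hM1 : 1 ≤ M := by omega
      have hMm : (m - 1).toNat = M - 1 := by omega
      rw [hMm]
      -- second product: shift
      have hsh := prod_shift α (c + 1) (c + (M - 1)) 1
      have hIcc : Finset.Icc (c + 1 + 1) (c + (M - 1) + 1) = Finset.Icc (c + 2) (c + M) := by
        congr 1 <;> omega
      rw [hIcc] at hsh
      have h2 : ∏ i ∈ Finset.Icc (c + 1) (c + (M - 1)), (α + 1 + (i : ℝ)) =
          ∏ i ∈ Finset.Icc (c + 2) (c + M), (α + (i : ℝ)) := by
        rw [← hsh]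
        apply Finset.prod_congr rfl
        intro i _; push_cast; ring
      rw [h2]
      -- first product: peel bottom
      have h1 : ∏ i ∈ Finset.Icc (c + 1) (c + M), (α + (i : ℝ)) =
          (α + ((c + 1 : ℕ) : ℝ)) * ∏ i ∈ Finset.Icc (c + 2) (c + M), (α + (i : ℝ)) := by
        rw [Finset.Icc_eq_cons_Ioc (by omega), Finset.prod_cons]
        rw [show Finset.Ioc (c + 1) (c + M) = Finset.Icc (c + 2) (c + M) from
          (Finset.Icc_add_one_left_eq_Ioc (c+1) (c+M)).symm]
      -- RHS: peel top
      have h3 : ∏ i ∈ Finset.Icc (c + 1 + 1) (c + 1 + M), (α + (i : ℝ)) =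
          (∏ i ∈ Finset.Icc (c + 2) (c + M), (α + (i : ℝ))) * (α + ((c + M + 1 : ℕ) : ℝ)) := by
        rw [show c + 1 + M = (c + M) + 1 by omega, show c + 1 + 1 = c + 2 by omega]
        rw [Finset.prod_Icc_succ_top (by omega)]
        try norm_num
      rw [h1, h3]
      have hfac : (M.factorial : ℝ) = (M : ℝ) * ((M - 1).factorial : ℝ) := by
        rw [show M = (M - 1) + 1 by omega, Nat.factorial_succ]
        push_cast
        try ring_nf
        try rw [show M - 1 + 1 - 1 = M - 1 by omega]
      have hf1 : ((M - 1).factorial : ℝ) ≠ 0 := Nat.cast_ne_zero.mpr (Nat.factorial_ne_zero _)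
      have hM0 : (M : ℝ) ≠ 0 := by positivity
      rw [hfac]
      push_cast
      field_simp
      ring

lemma entryB (α : ℝ) (m c : ℕ) :
    iteratedDeriv c (fun y => Real.exp y * laguerre α (m : ℤ) (-y)) 0 =
      (∏ i ∈ Finset.Icc (c + 1) (c + m), (α + (i : ℝ))) / (Nat.factorial m : ℝ) := by
  have hfun : (fun y => Real.exp y * laguerre α (m : ℤ) (-y)) =
      fun y => Real.exp y * (negLagPoly α m).eval y := by
    funext y; rw [negLagPoly_eval]
  rw [hfun, iteratedDeriv_exp_mul]
  simp only [Real.exp_zero, one_mul]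
  rw [Bval c m α, if_neg (by omega)]
  simp

lemma fallFac (n : ℕ) : ∀ c : ℕ, c ≤ n →
    ∏ t ∈ Finset.range c, (-(n : ℝ) + (t : ℝ)) =
      (-1 : ℝ) ^ c * ((Nat.factorial n : ℝ) / (Nat.factorial (n - c) : ℝ)) := by
  intro c
  induction c with
  | zero =>
    intro _
    rw [pow_zero, Nat.sub_zero, div_self (Nat.cast_ne_zero.mpr (Nat.factorial_ne_zero n))]
    simp
  | succ c ih =>
    intro h
    rw [Finset.prod_range_succ, ih (by omega)]
    have hfac : (Nat.factorial (n - c) : ℝ) =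
        ((n - c : ℕ) : ℝ) * (Nat.factorial (n - (c + 1)) : ℝ) := by
      rw [show n - c = (n - (c + 1)) + 1 by omega, Nat.factorial_succ]
      push_cast
      try congr 2
      try omega
    have h1 : (Nat.factorial (n - (c + 1)) : ℝ) ≠ 0 :=
      Nat.cast_ne_zero.mpr (Nat.factorial_ne_zero _)
    have h2 : ((n - c : ℕ) : ℝ) ≠ 0 := by
      have : 0 < n - c := by omega
      positivity
    have h3 : ((n - c : ℕ) : ℝ) = (n : ℝ) - (c : ℝ) := by
      push_cast [Nat.cast_sub (show c ≤ n by omega)]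
      ring
    rw [hfac, pow_succ]
    field_simp
    rw [h3]
    ring

lemma prod_alpha_merge (α : ℝ) (a b : ℕ) (h : a ≤ b) :
    (∏ t ∈ Finset.Icc 1 a, (α + (t : ℝ))) * ∏ t ∈ Finset.Icc (a + 1) b, (α + (t : ℝ)) =
      ∏ t ∈ Finset.Icc 1 b, (α + (t : ℝ)) := by
  rw [show Finset.Icc 1 a = Finset.Ioc 0 a from Finset.Icc_add_one_left_eq_Ioc 0 a,
      show Finset.Icc (a + 1) b = Finset.Ioc a b from Finset.Icc_add_one_left_eq_Ioc a b,
      show Finset.Icc 1 b = Finset.Ioc 0 b from Finset.Icc_add_one_left_eq_Ioc 0 b]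
  exact Finset.prod_Ioc_consecutive _ (Nat.zero_le a) h

lemma prod_range_shift (α : ℝ) (m c : ℕ) :
    ∏ t ∈ Finset.range c, (α + (m : ℝ) + 1 + (t : ℝ)) =
      ∏ t ∈ Finset.Icc (m + 1) (m + c), (α + (t : ℝ)) := by
  rw [show Finset.Icc (m + 1) (m + c) = Finset.Ico (m + 1) (m + c + 1) from
    (Finset.Ico_add_one_right_eq_Icc _ _).symm]
  rw [Finset.prod_Ico_eq_prod_range]
  rw [show m + c + 1 - (m + 1) = c by omega]
  apply Finset.prod_congr rfl
  intro t _
  push_cast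
  ring

lemma PartitionSeq.deg_le (p : PartitionSeq) (i : ℕ) (h : i < p.len) : p.deg i ≤ p.deg 0 := by
  have := p.antitone 0 i (Nat.zero_le i) h
  unfold PartitionSeq.deg
  omega

lemma PartitionSeq.deg_lt (p : PartitionSeq) (i j : ℕ) (hij : i < j) (h : j < p.len) :
    p.deg j < p.deg i := by
  have := p.antitone i j (le_of_lt hij) h
  unfold PartitionSeq.deg
  omega

lemma main_det (α : ℝ) (r1 r2 : ℕ) (nf mf : ℕ → ℕ)
    (M : Matrix (Fin (r1 + r2)) (Fin (r1 + r2)) ℝ)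
    (hM : ∀ i c : Fin (r1 + r2), M i c =
      if (i : ℕ) < r1 then
        (if (c : ℕ) ≤ nf (i : ℕ) then
          (-1 : ℝ) ^ (c : ℕ) *
            ((∏ t ∈ Finset.Icc ((c : ℕ) + 1) (nf (i : ℕ)), (α + (t : ℝ))) /
              (Nat.factorial (nf (i : ℕ) - (c : ℕ)) : ℝ))
        else 0)
      else
        (∏ t ∈ Finset.Icc ((c : ℕ) + 1) ((c : ℕ) + mf ((i : ℕ) - r1)), (α + (t : ℝ))) /
          (Nat.factorial (mf ((i : ℕ) - r1)) : ℝ))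
    (x : Fin (r1 + r2) → ℝ)
    (hx : ∀ k : Fin (r1 + r2), x k =
      if (k : ℕ) < r1 then -(nf (k : ℕ) : ℝ) else α + (mf ((k : ℕ) - r1) : ℝ) + 1)
    (e : Fin (r1 + r2) → ℝ)
    (he : ∀ k : Fin (r1 + r2), e k =
      if (k : ℕ) < r1 then
        (∏ t ∈ Finset.Icc 1 (nf (k : ℕ)), (α + (t : ℝ))) / (Nat.factorial (nf (k : ℕ)) : ℝ)
      else
        (∏ t ∈ Finset.Icc 1 (mf ((k : ℕ) - r1)), (α + (t : ℝ))) /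
          (Nat.factorial (mf ((k : ℕ) - r1)) : ℝ)) :
    M.det * (∏ c : Fin (r1 + r2), ∏ t ∈ Finset.Icc 1 (c : ℕ), (α + (t : ℝ))) =
      (∏ i : Fin (r1 + r2), e i) *
        ∏ i : Fin (r1 + r2), ∏ j ∈ Finset.Ioi i, (x j - x i) := by
  classical
  set pf : Fin (r1 + r2) → Polynomial ℝ :=
    fun c => ∏ t ∈ Finset.range (c : ℕ), (Polynomial.X + Polynomial.C (t : ℝ)) with hpf
  have hdeg : ∀ c : Fin (r1 + r2), (pf c).natDegree = (c : ℕ) := by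
    intro c
    rw [hpf, Polynomial.natDegree_prod_of_monic _ _ (fun t _ => Polynomial.monic_X_add_C _)]
    have hsum : ∑ t ∈ Finset.range (c : ℕ),
        (Polynomial.X + Polynomial.C ((t : ℕ) : ℝ)).natDegree = ∑ t ∈ Finset.range (c : ℕ), 1 :=
      Finset.sum_congr rfl (fun t _ => Polynomial.natDegree_X_add_C _)
    rw [hsum]
    simp
  have hmon : ∀ c : Fin (r1 + r2), (pf c).Monic := fun c =>
    Polynomial.monic_prod_of_monic _ _ (fun t _ => Polynomial.monic_X_add_C _)
  have hVd := Matrix.det_eval_matrixOfPolynomials_eq_det_vandermonde x pf hdeg hmon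
  rw [Matrix.det_vandermonde] at hVd
  rw [mul_comm, ← Matrix.det_mul_row (fun c : Fin (r1 + r2) =>
    ∏ t ∈ Finset.Icc 1 (c : ℕ), (α + (t : ℝ))) M]
  have hEq : (Matrix.of fun i c : Fin (r1 + r2) =>
        (∏ t ∈ Finset.Icc 1 (c : ℕ), (α + (t : ℝ))) * M i c) =
      Matrix.of (fun i c : Fin (r1 + r2) =>
        e i * ((Matrix.of fun i' c' : Fin (r1 + r2) =>
          Polynomial.eval (x i') (pf c')) i c)) := by
    ext i c
    simp only [Matrix.of_apply]
    rw [hM, he, hx, hpf]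
    rw [Polynomial.eval_prod]
    simp only [Polynomial.eval_add, Polynomial.eval_X, Polynomial.eval_C]
    by_cases hi : (i : ℕ) < r1
    · rw [if_pos hi, if_pos hi, if_pos hi]
      by_cases hc : (c : ℕ) ≤ nf (i : ℕ)
      · rw [if_pos hc, fallFac (nf (i : ℕ)) (c : ℕ) hc]
        have hmerge := prod_alpha_merge α (c : ℕ) (nf (i : ℕ)) hc
        have hn0 : (Nat.factorial (nf (i : ℕ)) : ℝ) ≠ 0 :=
          Nat.cast_ne_zero.mpr (Nat.factorial_ne_zero _)
        have hnc0 : (Nat.factorial (nf (i : ℕ) - (c : ℕ)) : ℝ) ≠ 0 :=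
          Nat.cast_ne_zero.mpr (Nat.factorial_ne_zero _)
        rw [← hmerge]
        field_simp
      · rw [if_neg hc, mul_zero]
        refine (mul_eq_zero_of_right _ ?_).symm
        have hmem : nf (i : ℕ) ∈ Finset.range (c : ℕ) := Finset.mem_range.mpr (by omega)
        refine Finset.prod_eq_zero hmem ?_
        exact neg_add_cancel _
    · rw [if_neg hi, if_neg hi, if_neg hi]
      rw [prod_range_shift α (mf ((i : ℕ) - r1)) (c : ℕ)]
      have hm1 := prod_alpha_merge α (mf ((i : ℕ) - r1))
        ((mf ((i : ℕ) - r1)) + (c : ℕ)) (by omega)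
      have hm2 := prod_alpha_merge α (c : ℕ) ((c : ℕ) + mf ((i : ℕ) - r1)) (by omega)
      rw [show Finset.Icc 1 ((c : ℕ) + mf ((i : ℕ) - r1)) =
        Finset.Icc 1 (mf ((i : ℕ) - r1) + (c : ℕ)) by rw [Nat.add_comm]] at hm2
      have hmf0 : (Nat.factorial (mf ((i : ℕ) - r1)) : ℝ) ≠ 0 :=
        Nat.cast_ne_zero.mpr (Nat.factorial_ne_zero _)
      field_simp
      linear_combination hm2 - hm1
  rw [hEq, Matrix.det_mul_column, ← hVd]

/-- **Nonvanishing at the origin.** With `n₁ = λ₁ + r₁ − 1` (or `0` if `λ = ∅`) and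
`m₁ = μ₁ + r₂ − 1` (or `0` if `μ = ∅`), if `α ∉ {−1, …, −max(n₁,m₁)}` and
`α ≠ −n_i − m_j − 1` for all `i, j`, then `Ω_{λ,μ}^{(α)}(0) ≠ 0`. -/
theorem genLag_nonzero_at_origin (α : ℝ) (lam mu : PartitionSeq)
    (h1 : ∀ k : ℕ, 1 ≤ k →
      k ≤ max (if lam.len = 0 then 0 else lam.deg 0) (if mu.len = 0 then 0 else mu.deg 0) →
      α ≠ -(k : ℝ))
    (h2 : ∀ i, i < lam.len → ∀ j, j < mu.len →
      α ≠ -(lam.deg i : ℝ) - (mu.deg j : ℝ) - 1) :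
    genLagFun α lam mu 0 ≠ 0 := by
  classical
  set r1 := lam.len with hr1
  set r2 := mu.len with hr2
  set M : Matrix (Fin (r1 + r2)) (Fin (r1 + r2)) ℝ := Matrix.of (fun i c : Fin (r1 + r2) =>
    if (i : ℕ) < r1 then
      (if (c : ℕ) ≤ lam.deg (i : ℕ) then
        (-1 : ℝ) ^ (c : ℕ) *
          ((∏ t ∈ Finset.Icc ((c : ℕ) + 1) (lam.deg (i : ℕ)), (α + (t : ℝ))) /
            (Nat.factorial (lam.deg (i : ℕ) - (c : ℕ)) : ℝ))
      else 0)
    else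
      (∏ t ∈ Finset.Icc ((c : ℕ) + 1) ((c : ℕ) + mu.deg ((i : ℕ) - r1)), (α + (t : ℝ))) /
        (Nat.factorial (mu.deg ((i : ℕ) - r1)) : ℝ)) with hMdef
  have hgen : genLagFun α lam mu 0 = M.det := by
    unfold genLagFun Wr
    rw [show (-(mu.len : ℝ)) * 0 = 0 by ring, Real.exp_zero, one_mul]
    congr 1
    ext i c
    simp only [Matrix.of_apply, hMdef]
    by_cases hi : (i : ℕ) < lam.len
    · have hf : (fun y => if (i : ℕ) < lam.len then laguerre α (lam.deg (i : ℕ)) y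
          else Real.exp y * laguerre α (mu.deg ((i : ℕ) - lam.len)) (-y)) =
          fun y => laguerre α (lam.deg (i : ℕ)) y := by
        funext y; rw [if_pos hi]
      rw [hf, if_pos hi]
      exact entryA α (lam.deg (i : ℕ)) (c : ℕ)
    · have hf : (fun y => if (i : ℕ) < lam.len then laguerre α (lam.deg (i : ℕ)) y
          else Real.exp y * laguerre α (mu.deg ((i : ℕ) - lam.len)) (-y)) =
          fun y => Real.exp y * laguerre α (mu.deg ((i : ℕ) - lam.len)) (-y) := by
        funext y; rw [if_neg hi]
      rw [hf, if_neg hi]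
      exact entryB α (mu.deg ((i : ℕ) - lam.len)) (c : ℕ)
  set x : Fin (r1 + r2) → ℝ := fun k =>
    if (k : ℕ) < r1 then -(lam.deg (k : ℕ) : ℝ) else α + (mu.deg ((k : ℕ) - r1) : ℝ) + 1 with hxdef
  set e : Fin (r1 + r2) → ℝ := fun k =>
    if (k : ℕ) < r1 then
      (∏ t ∈ Finset.Icc 1 (lam.deg (k : ℕ)), (α + (t : ℝ))) /
        (Nat.factorial (lam.deg (k : ℕ)) : ℝ)
    else
      (∏ t ∈ Finset.Icc 1 (mu.deg ((k : ℕ) - r1)), (α + (t : ℝ))) /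
        (Nat.factorial (mu.deg ((k : ℕ) - r1)) : ℝ) with hedef
  have keydet := main_det α r1 r2 lam.deg mu.deg M (fun i c => rfl) x (fun k => rfl)
    e (fun k => rfl)
  -- nonvanishing of the alpha-product factors
  have halam : ∀ i : ℕ, i < r1 → ∀ t ∈ Finset.Icc 1 (lam.deg i), α + (t : ℝ) ≠ 0 := by
    intro i hi t ht h0
    simp only [Finset.mem_Icc] at ht
    have hle : t ≤ max (if lam.len = 0 then 0 else lam.deg 0)
        (if mu.len = 0 then 0 else mu.deg 0) := by
      refine le_trans ?_ (le_max_left _ _)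
      rw [if_neg (by omega)]
      exact le_trans ht.2 (lam.deg_le i hi)
    exact h1 t ht.1 hle (by linarith)
  have hamu : ∀ j : ℕ, j < r2 → ∀ t ∈ Finset.Icc 1 (mu.deg j), α + (t : ℝ) ≠ 0 := by
    intro j hj t ht h0
    simp only [Finset.mem_Icc] at ht
    have hle : t ≤ max (if lam.len = 0 then 0 else lam.deg 0)
        (if mu.len = 0 then 0 else mu.deg 0) := by
      refine le_trans ?_ (le_max_right _ _)
      rw [if_neg (by omega)]
      exact le_trans ht.2 (mu.deg_le j hj)
    exact h1 t ht.1 hle (by linarith)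
  have hE : (∏ i : Fin (r1 + r2), e i) ≠ 0 := by
    rw [Finset.prod_ne_zero_iff]
    intro i _
    simp only [hedef]
    by_cases hi : (i : ℕ) < r1
    · rw [if_pos hi]
      exact div_ne_zero (Finset.prod_ne_zero_iff.mpr (halam (i : ℕ) hi))
        (Nat.cast_ne_zero.mpr (Nat.factorial_ne_zero _))
    · rw [if_neg hi]
      have hj : (i : ℕ) - r1 < r2 := by
        have := i.isLt; omega
      exact div_ne_zero (Finset.prod_ne_zero_iff.mpr (hamu _ hj))
        (Nat.cast_ne_zero.mpr (Nat.factorial_ne_zero _))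
  have hVD : (∏ i : Fin (r1 + r2), ∏ j ∈ Finset.Ioi i, (x j - x i)) ≠ 0 := by
    rw [Finset.prod_ne_zero_iff]
    intro i _
    rw [Finset.prod_ne_zero_iff]
    intro j hj
    have hij' : i < j := Finset.mem_Ioi.mp hj
    have hij : (i : ℕ) < (j : ℕ) := hij'
    have hjlt := j.isLt
    simp only [hxdef]
    by_cases hi' : (i : ℕ) < r1
    · by_cases hj' : (j : ℕ) < r1
      · rw [if_pos hi', if_pos hj']
        have hd := lam.deg_lt (i : ℕ) (j : ℕ) hij hj'
        intro h0
        have : (lam.deg (j : ℕ) : ℝ) = (lam.deg (i : ℕ) : ℝ) := by linarith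
        have := Nat.cast_injective (R := ℝ) this
        omega
      · rw [if_pos hi', if_neg hj']
        have hjr : (j : ℕ) - r1 < r2 := by omega
        intro h0
        exact h2 (i : ℕ) hi' ((j : ℕ) - r1) hjr (by linarith)
    · by_cases hj' : (j : ℕ) < r1
      · omega
      · rw [if_neg hi', if_neg hj']
        have hir : (i : ℕ) - r1 < r2 := by have := i.isLt; omega
        have hjr : (j : ℕ) - r1 < r2 := by omega
        have hd := mu.deg_lt ((i : ℕ) - r1) ((j : ℕ) - r1) (by omega) hjr
        intro h0
        have : (mu.deg ((j : ℕ) - r1) : ℝ) = (mu.deg ((i : ℕ) - r1) : ℝ) := by linarith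
        have := Nat.cast_injective (R := ℝ) this
        omega
  intro h0
  rw [hgen] at h0
  rw [h0, zero_mul] at keydet
  exact (mul_ne_zero hE hVD) keydet.symm
end

section
/- For every α ∈ ℝ, every pair of partitions λ, μ of lengths r1, r2, and every x, one has Ω_{λ,μ}^{(α)}(x) = (−1)^{r1(r1−1)/2 + r2(r2−1)/2} · Ω_{μ,λ}^{(α)}(−x). -/
open scoped BigOperators

open Finset Equiv

lemma contDiff_laguerre (α : ℝ) (n : ℤ) : ContDiff ℝ (⊤:ℕ∞) (laguerre α n) := by
  have hl : laguerre α n = fun x => if n < 0 then (0:ℝ) else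
      ∑ k ∈ Finset.range (n.toNat + 1),
        ((-1 : ℝ) ^ k / (Nat.factorial k : ℝ)) *
          ((∏ i ∈ Finset.Icc (k + 1) n.toNat, (α + (i : ℝ))) / (Nat.factorial (n.toNat - k) : ℝ)) *
          x ^ k := rfl
  by_cases h : n < 0
  · simp only [hl, if_pos h]; exact contDiff_const
  · simp only [hl, if_neg h]
    apply ContDiff.sum
    intro k _
    exact (contDiff_const.mul contDiff_const).mul (contDiff_id.pow k)

lemma iteratedDeriv_add'' {n : ℕ} {f g : ℝ → ℝ} (hf : ContDiff ℝ (⊤:ℕ∞) f)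
    (hg : ContDiff ℝ (⊤:ℕ∞) g) (x : ℝ) :
    iteratedDeriv n (fun y => f y + g y) x = iteratedDeriv n f x + iteratedDeriv n g x := by
  have := iteratedDerivWithin_add (Set.mem_univ x) uniqueDiffOn_univ
    ((hf.of_le (m := (n : WithTop ℕ∞)) (by exact_mod_cast le_top)).contDiffWithinAt (s := Set.univ) (x := x)) ((hg.of_le (m := (n : WithTop ℕ∞)) (by exact_mod_cast le_top)).contDiffWithinAt (s := Set.univ) (x := x))
    (n := n)
  simp only [iteratedDerivWithin_univ] at this
  exact this

lemma iteratedDeriv_cmul {n : ℕ} (c : ℝ) {f : ℝ → ℝ} (hf : ContDiff ℝ (⊤:ℕ∞) f) (x : ℝ) :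
    iteratedDeriv n (fun y => c * f y) x = c * iteratedDeriv n f x := by
  have := iteratedDerivWithin_const_mul (Set.mem_univ x) uniqueDiffOn_univ c
    ((hf.of_le (m := (n : WithTop ℕ∞)) (by exact_mod_cast le_top)).contDiffWithinAt (s := Set.univ) (x := x)) (n := n)
  simpa [iteratedDerivWithin_univ] using this

lemma pascal_sum (n : ℕ) (c E : ℝ) (D : ℕ → ℝ) :
    ∑ j ∈ range (n+1), (n.choose j : ℝ) * c^(n-j) * (E * (c * D j + D (j+1)))
      = ∑ j ∈ range (n+2), ((n+1).choose j : ℝ) * c^(n+1-j) * (E * D j) := by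
  have hL : ∑ j ∈ range (n+1), (n.choose j : ℝ) * c^(n-j) * (E * (c * D j + D (j+1)))
      = (∑ j ∈ range (n+1), (n.choose j : ℝ) * c^(n-j) * c * (E * D j))
        + ∑ j ∈ range (n+1), (n.choose j : ℝ) * c^(n-j) * (E * D (j+1)) := by
    rw [← sum_add_distrib]
    exact sum_congr rfl fun j _ => by ring
  have h1 : ∑ j ∈ range (n+1), (n.choose j : ℝ) * c^(n-j) * c * (E * D j)
      = c^(n+1) * (E * D 0) + ∑ j ∈ range (n+1), (n.choose (j+1) : ℝ) * c^(n-j) * (E * D (j+1)) := by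
    rw [sum_range_succ' (fun j => (n.choose j : ℝ) * c^(n-j) * c * (E * D j)) n,
      sum_range_succ (fun j => (n.choose (j+1) : ℝ) * c^(n-j) * (E * D (j+1))) n]
    have hg : (n.choose (n+1) : ℝ) * c^(n-n) * (E * D (n+1)) = 0 := by
      simp [Nat.choose_succ_self]
    rw [hg, add_zero, add_comm]
    congr 1
    · simp [pow_succ]
    · refine sum_congr rfl fun j hj => ?_
      rw [mem_range] at hj
      have hnj : n - j = (n - (j+1)) + 1 := by omega
      rw [hnj, pow_succ]
      ring
  have h2 : ∑ j ∈ range (n+2), ((n+1).choose j : ℝ) * c^(n+1-j) * (E * D j)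
      = c^(n+1) * (E * D 0)
        + ∑ j ∈ range (n+1), ((n.choose j : ℝ) + (n.choose (j+1) : ℝ)) * c^(n-j) * (E * D (j+1)) := by
    rw [sum_range_succ' (fun j => ((n+1).choose j : ℝ) * c^(n+1-j) * (E * D j)) (n+1)]
    rw [add_comm]
    congr 1
    · simp
    · refine sum_congr rfl fun j hj => ?_
      rw [Nat.choose_succ_succ, Nat.succ_sub_succ]
      push_cast
      ring
  rw [hL, h1, h2, add_assoc]
  congr 1
  rw [← sum_add_distrib]
  refine sum_congr rfl fun j _ => by ring

lemma expMul_deriv (c : ℝ) {f : ℝ → ℝ} (hf : Differentiable ℝ f) :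
    deriv (fun y => Real.exp (c*y) * f y) = fun y => Real.exp (c*y) * (c * f y + deriv f y) := by
  funext y
  have h1 : HasDerivAt (fun y : ℝ => Real.exp (c*y)) (Real.exp (c*y) * (c*1)) y :=
    ((hasDerivAt_id y).const_mul c).exp
  have h2 := (hf y).hasDerivAt
  have h3 := h1.mul h2
  rw [show (fun y => Real.exp (c*y) * f y) = (fun y => Real.exp (c*y)) * f from rfl, h3.deriv]
  ring

lemma iteratedDeriv_exp_mul_s10 (c : ℝ) : ∀ (n : ℕ) (f : ℝ → ℝ), ContDiff ℝ (⊤:ℕ∞) f → ∀ x : ℝ,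
    iteratedDeriv n (fun y => Real.exp (c*y) * f y) x
      = ∑ j ∈ range (n+1), (n.choose j : ℝ) * c^(n-j) * (Real.exp (c*x) * iteratedDeriv j f x) := by
  intro n
  induction n with
  | zero => intro f hf x; simp
  | succ n ih =>
    intro f hf x
    have hd : ContDiff ℝ (⊤:ℕ∞) (deriv f) := (contDiff_infty_iff_deriv.mp hf).2
    have hg : ContDiff ℝ (⊤:ℕ∞) (fun y => c * f y + deriv f y) :=
      (contDiff_const.mul hf).add hd
    rw [iteratedDeriv_succ', expMul_deriv c (hf.differentiable (by norm_num)), ih _ hg x]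
    have hsplit : ∀ j, iteratedDeriv j (fun y => c * f y + deriv f y) x
        = c * iteratedDeriv j f x + iteratedDeriv (j+1) f x := by
      intro j
      rw [iteratedDeriv_add'' (contDiff_const.mul hf) hd, iteratedDeriv_cmul c hf,
        iteratedDeriv_succ']
    simp_rw [hsplit]
    exact pascal_sum n c (Real.exp (c*x)) (fun j => iteratedDeriv j f x)

lemma wr_exp_mul {r : ℕ} (c : ℝ) (f : Fin r → ℝ → ℝ) (hf : ∀ i, ContDiff ℝ (⊤:ℕ∞) (f i))
    (x : ℝ) :
    Wr (fun i y => Real.exp (c*y) * f i y) x = Real.exp (c*x) ^ r * Wr f x := by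
  classical
  set M : Matrix (Fin r) (Fin r) ℝ := Matrix.of fun i j => iteratedDeriv (j:ℕ) (f i) x with hM
  set B : Matrix (Fin r) (Fin r) ℝ := Matrix.of fun j k =>
    if (j:ℕ) ≤ (k:ℕ) then ((k:ℕ).choose (j:ℕ) : ℝ) * c^((k:ℕ)-(j:ℕ)) * Real.exp (c*x) else 0
    with hB
  have hMB : (Matrix.of fun i k : Fin r =>
      iteratedDeriv (k:ℕ) (fun y => Real.exp (c*y) * f i y) x) = M * B := by
    ext i k
    rw [Matrix.mul_apply]
    simp only [Matrix.of_apply, hM, hB]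
    rw [iteratedDeriv_exp_mul_s10 c (k:ℕ) (f i) (hf i) x]
    have step1 : ∑ j : Fin r, iteratedDeriv (j:ℕ) (f i) x *
        (if (j:ℕ) ≤ (k:ℕ) then ((k:ℕ).choose (j:ℕ) : ℝ) * c^((k:ℕ)-(j:ℕ)) * Real.exp (c*x) else 0)
      = ∑ j ∈ range r, iteratedDeriv j (f i) x *
        (if j ≤ (k:ℕ) then ((k:ℕ).choose j : ℝ) * c^((k:ℕ)-j) * Real.exp (c*x) else 0) := by
      exact Fin.sum_univ_eq_sum_range (fun j => iteratedDeriv j (f i) x *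
        (if j ≤ (k:ℕ) then ((k:ℕ).choose j : ℝ) * c^((k:ℕ)-j) * Real.exp (c*x) else 0)) r
    rw [step1]
    rw [show (∑ j ∈ range r, iteratedDeriv j (f i) x *
        (if j ≤ (k:ℕ) then ((k:ℕ).choose j : ℝ) * c^((k:ℕ)-j) * Real.exp (c*x) else 0))
      = ∑ j ∈ range ((k:ℕ)+1), iteratedDeriv j (f i) x *
        (((k:ℕ).choose j : ℝ) * c^((k:ℕ)-j) * Real.exp (c*x)) from ?_]
    · exact sum_congr rfl fun j _ => by ring
    · simp only [mul_ite, mul_zero]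
      rw [← sum_filter]
      have : filter (fun j => j ≤ (k:ℕ)) (range r) = range ((k:ℕ)+1) := by
        ext j
        simp only [mem_filter, mem_range, Nat.lt_succ_iff]
        exact ⟨fun h => h.2, fun h => ⟨lt_of_le_of_lt h k.isLt, h⟩⟩
      rw [this]
  have hBdet : B.det = Real.exp (c*x) ^ r := by
    have htri : B.BlockTriangular id := by
      intro i j hij
      simp only [hB, Matrix.of_apply]
      rw [if_neg]
      exact not_le.mpr hij
    rw [Matrix.det_of_upperTriangular htri]
    have : ∀ i : Fin r, B i i = Real.exp (c*x) := by
      intro i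
      simp [hB]
    simp_rw [this]
    simp
  unfold Wr
  rw [hMB, Matrix.det_mul, hBdet]
  ring

lemma wr_comp_neg {r : ℕ} (f : Fin r → ℝ → ℝ) (x : ℝ) :
    Wr (fun i y => f i (-y)) x = (-1:ℝ)^(r*(r-1)/2) * Wr f (-x) := by
  unfold Wr
  have h1 : (Matrix.of fun i j : Fin r => iteratedDeriv (j:ℕ) (fun y => f i (-y)) x)
      = Matrix.of fun i j : Fin r =>
          ((-1:ℝ)^(j:ℕ)) * iteratedDeriv (j:ℕ) (f i) (-x) := by
    ext i j
    simpa [smul_eq_mul] using iteratedDeriv_comp_neg (j:ℕ) (f i) x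
  rw [h1]
  have h2 := Matrix.det_mul_row (fun j : Fin r => (-1:ℝ)^(j:ℕ))
    (Matrix.of fun i j : Fin r => iteratedDeriv (j:ℕ) (f i) (-x))
  rw [show (Matrix.of fun i j : Fin r => ((-1:ℝ)^(j:ℕ)) * iteratedDeriv (j:ℕ) (f i) (-x))
    = Matrix.of fun i j : Fin r => ((-1:ℝ)^(j:ℕ)) *
      (Matrix.of fun i j : Fin r => iteratedDeriv (j:ℕ) (f i) (-x)) i j from rfl]
  rw [h2]
  congr 1
  rw [Finset.prod_pow_eq_pow_sum]
  congr 1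
  rw [Fin.sum_univ_eq_sum_range (fun j => j) r, Finset.sum_range_id]

lemma rotate_pow_val {M : ℕ} : ∀ (a : ℕ) (i : Fin (M+1)),
    ((((finRotate (M+1))^a) i : ℕ)) = ((i:ℕ) + a) % (M+1) := by
  intro a
  induction a with
  | zero => intro i; simp [Nat.mod_eq_of_lt i.isLt]
  | succ a ih =>
    intro i
    rw [pow_succ, Equiv.Perm.mul_apply, finRotate_succ_apply, ih (i+1), Fin.add_def]
    simp only [Fin.val_one']
    rw [Nat.mod_add_mod]
    have h2 : ((i:ℕ) + 1 % (M+1) + a) ≡ ((i:ℕ) + (a+1)) [MOD (M+1)] := by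
      calc ((i:ℕ) + 1 % (M+1) + a) ≡ ((i:ℕ) + 1 + a) [MOD (M+1)] :=
            (((Nat.ModEq.refl _).add (Nat.mod_modEq 1 (M+1))).add (Nat.ModEq.refl a))
        _ = (i:ℕ) + (a+1) := by ring
    exact h2

lemma sign_rotate_pow (M a : ℕ) :
    Equiv.Perm.sign ((finRotate (M+1))^a) = (-1:ℤˣ)^(M*a) := by
  rw [map_pow, sign_finRotate, ← pow_mul, Nat.add_sub_cancel]

lemma negpow_mod (m : ℕ) : (-1:ℝ)^m = (-1)^(m%2) := by
  conv_lhs => rw [← Nat.div_add_mod m 2]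
  rw [pow_add, pow_mul, neg_one_sq, one_pow, one_mul]

lemma negpow_congr {m n : ℕ} (h : m % 2 = n % 2) : (-1:ℝ)^m = (-1)^n := by
  rw [negpow_mod m, negpow_mod n, h]

lemma two_dvd_mul_pred (n : ℕ) : 2 ∣ n * (n-1) := by
  rcases n with _ | m
  · simp
  · simpa [Nat.succ_sub_one, mul_comm] using (Nat.even_mul_succ_self m).two_dvd

lemma tri_split (a b : ℕ) :
    (a+b) * ((a+b)-1) = a*(a-1) + b*(b-1) + 2*(a*b) := by
  rcases a with _ | a'
  · simp
  · rcases b with _ | b'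
    · simp
    · have h1 : (a'+1) + (b'+1) - 1 = a' + b' + 1 := by omega
      have h2 : (a'+1) - 1 = a' := by omega
      have h3 : (b'+1) - 1 = b' := by omega
      rw [h1, h2, h3]
      ring

lemma parity_fact (a b : ℕ) :
    (-1:ℝ)^(a*((a+b)-1) + (a+b)*((a+b)-1)/2) = (-1)^(a*(a-1)/2 + b*(b-1)/2) := by
  apply negpow_congr
  obtain ⟨p, hp⟩ := two_dvd_mul_pred a
  obtain ⟨q, hq⟩ := two_dvd_mul_pred b
  have ht : a*((a+b)-1) = 2*p + a*b := by
    rcases a with _ | a'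
    · simp at hp ⊢; omega
    · have h1 : (a'+1) + b - 1 = a' + b := by omega
      have h2 : (a'+1) * (a'+b) = (a'+1)*a' + (a'+1)*b := by ring
      rw [h1, h2, ← hp]
      have : (a'+1) - 1 = a' := by omega
      rw [this]
  have hr : (a+b)*((a+b)-1) = 2*p + 2*q + 2*(a*b) := by
    rw [tri_split a b, hp, hq]
  rw [ht, hr, hp, hq]
  set s := a*b
  omega

/-- **Duality of the two partitions.** For every `α`, partitions `λ, μ` and every `x`,
`Ω_{λ,μ}^{(α)}(x) = (−1)^{r₁(r₁−1)/2 + r₂(r₂−1)/2} Ω_{μ,λ}^{(α)}(−x)`. -/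
theorem genLag_duality (α : ℝ) (lam mu : PartitionSeq) (x : ℝ) :
    genLagFun α lam mu x =
      (-1 : ℝ) ^ (lam.len * (lam.len - 1) / 2 + mu.len * (mu.len - 1) / 2) *
        genLagFun α mu lam (-x) := by
  classical
  rcases Nat.eq_zero_or_pos (lam.len + mu.len) with h0 | hpos
  · have ha : lam.len = 0 := by omega
    have hb : mu.len = 0 := by omega
    haveI h1 : IsEmpty (Fin (lam.len + mu.len)) := ⟨fun i => absurd i.isLt (by omega)⟩
    haveI h2 : IsEmpty (Fin (mu.len + lam.len)) := ⟨fun i => absurd i.isLt (by omega)⟩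
    simp [genLagFun, Wr, ha, hb, Matrix.det_isEmpty]
  obtain ⟨M, hM⟩ : ∃ M, lam.len + mu.len = M + 1 := ⟨lam.len + mu.len - 1, by omega⟩
  set F : Fin (lam.len + mu.len) → ℝ → ℝ := fun i y =>
    if (i : ℕ) < lam.len then laguerre α (lam.deg (i : ℕ)) y
    else Real.exp y * laguerre α (mu.deg ((i : ℕ) - lam.len)) (-y) with hF
  set G : Fin (mu.len + lam.len) → ℝ → ℝ := fun i y =>
    if (i : ℕ) < mu.len then laguerre α (mu.deg (i : ℕ)) y
    else Real.exp y * laguerre α (lam.deg ((i : ℕ) - mu.len)) (-y) with hG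
  set H : Fin (mu.len + lam.len) → ℝ → ℝ := fun i y =>
    if (i:ℕ) < mu.len then Real.exp y * laguerre α (mu.deg (i:ℕ)) (-y)
    else laguerre α (lam.deg ((i:ℕ) - mu.len)) y with hH
  have hunfold1 : genLagFun α lam mu x = Real.exp (-(mu.len:ℝ)*x) * Wr F x := rfl
  have hunfold2 : genLagFun α mu lam (-x) = Real.exp (-(lam.len:ℝ)*(-x)) * Wr G (-x) := rfl
  have hGsm : ∀ i, ContDiff ℝ (⊤:ℕ∞) (G i) := by
    intro i
    by_cases hi : (i:ℕ) < mu.len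
    · simp only [hG, hi, if_true]
      exact contDiff_laguerre α _
    · simp only [hG, hi, if_false]
      exact Real.contDiff_exp.mul ((contDiff_laguerre α _).comp contDiff_neg)
  have hstepA : Wr (fun i y => Real.exp ((-1)*y) * G i y) (-x)
      = Real.exp ((-1)*(-x)) ^ (mu.len + lam.len) * Wr G (-x) := wr_exp_mul (-1) G hGsm (-x)
  have hstepB : Wr (fun (i : Fin (mu.len+lam.len)) (y:ℝ) => Real.exp ((-1)*(-y)) * G i (-y)) x
      = (-1:ℝ)^((mu.len+lam.len)*((mu.len+lam.len)-1)/2)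
          * Wr (fun i y => Real.exp ((-1)*y) * G i y) (-x) :=
    wr_comp_neg (fun i y => Real.exp ((-1)*y) * G i y) x
  have hHeq : (fun (i : Fin (mu.len+lam.len)) (y:ℝ) => Real.exp ((-1)*(-y)) * G i (-y)) = H := by
    funext i y
    simp only [hG, hH]
    by_cases hi : (i:ℕ) < mu.len
    · simp only [hi, if_true]
      norm_num
    · simp only [hi, if_false]
      rw [show (-1:ℝ) * -y = y by ring, ← mul_assoc, ← Real.exp_add]
      simp
  -- step D
  set e : Fin (M+1) ≃ Fin (mu.len + lam.len) := finCongr (by omega) with he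
  set e' : Fin (M+1) ≃ Fin (lam.len + mu.len) := finCongr hM.symm with he'
  set σ : Equiv.Perm (Fin (M+1)) := (finRotate (M+1))^lam.len with hσdef
  have hfun : ∀ i : Fin (M+1), H (e i) = F (e' (σ i)) := by
    intro i
    have hiM := i.isLt
    have hσ : ((σ i : ℕ)) = ((i:ℕ) + lam.len) % (M+1) := rotate_pow_val lam.len i
    have hei : ((e i : ℕ)) = (i:ℕ) := by simp [he]
    have he'' : ((e' (σ i) : ℕ)) = ((i:ℕ) + lam.len) % (M+1) := by
      rw [← hσ]; simp [he']
    funext y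
    simp only [hH, hF]
    by_cases hi : (i:ℕ) < mu.len
    · have h1 : ((i:ℕ) + lam.len) % (M+1) = (i:ℕ) + lam.len := Nat.mod_eq_of_lt (by omega)
      rw [hei, he'', h1, if_pos hi, if_neg (by omega), Nat.add_sub_cancel]
    · have h2 : ((i:ℕ) + lam.len) % (M+1) = (i:ℕ) - mu.len := by
        rw [Nat.mod_eq_sub_mod (by omega), Nat.mod_eq_of_lt (by omega)]
        omega
      rw [hei, he'', h2, if_neg hi, if_pos (by omega)]
  have hdet1 : Wr H x
      = Matrix.det (Matrix.of fun i k : Fin (M+1) => iteratedDeriv (k:ℕ) (H (e i)) x) := by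
    unfold Wr
    rw [← Matrix.det_submatrix_equiv_self e
      (Matrix.of fun i j : Fin (mu.len+lam.len) => iteratedDeriv (j:ℕ) (H i) x)]
    congr 1
  have hdet2 : Wr F x
      = Matrix.det (Matrix.of fun i k : Fin (M+1) => iteratedDeriv (k:ℕ) (F (e' i)) x) := by
    unfold Wr
    rw [← Matrix.det_submatrix_equiv_self e'
      (Matrix.of fun i j : Fin (lam.len+mu.len) => iteratedDeriv (j:ℕ) (F i) x)]
    congr 1
  have hstepD : Wr H x = (-1:ℝ)^(lam.len * M) * Wr F x := by
    rw [hdet1, hdet2]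
    have hmat : (Matrix.of fun i k : Fin (M+1) => iteratedDeriv (k:ℕ) (H (e i)) x)
        = (Matrix.of fun i k : Fin (M+1) => iteratedDeriv (k:ℕ) (F (e' i)) x).submatrix σ id := by
      ext i k
      simp [Matrix.submatrix_apply, hfun i]
    rw [hmat, Matrix.det_permute, hσdef, sign_rotate_pow]
    norm_num [mul_comm]
  -- combine
  have key : Wr F x = (-1:ℝ)^(lam.len*M) * Wr H x := by
    rw [hstepD, ← mul_assoc, ← pow_add, Even.neg_one_pow ⟨lam.len*M, rfl⟩, one_mul]
  rw [hunfold1, hunfold2, key, ← hHeq, hstepB, hstepA]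
  have hsign : (-1:ℝ)^(lam.len*M) * (-1:ℝ)^((mu.len+lam.len)*((mu.len+lam.len)-1)/2)
      = (-1:ℝ)^(lam.len * (lam.len - 1) / 2 + mu.len * (mu.len - 1) / 2) := by
    rw [← pow_add]
    have hc : mu.len + lam.len = lam.len + mu.len := by omega
    rw [hc]
    have hMeq : M = (lam.len + mu.len) - 1 := by omega
    rw [hMeq]
    exact parity_fact lam.len mu.len
  have hexp : Real.exp (-(mu.len:ℝ)*x) * Real.exp ((-1)*(-x)) ^ (mu.len + lam.len)
      = Real.exp (-(lam.len:ℝ)*(-x)) := by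
    rw [show Real.exp ((-1)*(-x)) = Real.exp x by norm_num, ← Real.exp_nat_mul, ← Real.exp_add]
    congr 1
    push_cast
    ring
  calc Real.exp (-(mu.len:ℝ)*x) * ((-1:ℝ)^(lam.len*M) *
        ((-1:ℝ)^((mu.len+lam.len)*((mu.len+lam.len)-1)/2) *
          (Real.exp ((-1)*(-x)) ^ (mu.len + lam.len) * Wr G (-x))))
      = ((-1:ℝ)^(lam.len*M) * (-1:ℝ)^((mu.len+lam.len)*((mu.len+lam.len)-1)/2)) *
        ((Real.exp (-(mu.len:ℝ)*x) * Real.exp ((-1)*(-x)) ^ (mu.len + lam.len)) * Wr G (-x)) := by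
        ring
    _ = (-1 : ℝ) ^ (lam.len * (lam.len - 1) / 2 + mu.len * (mu.len - 1) / 2) *
        (Real.exp (-(lam.len:ℝ)*(-x)) * Wr G (-x)) := by rw [hsign, hexp]
end

section
/- Let r ≥ 1 and let x_1,…,x_r be pairwise distinct real numbers (x_i ≠ x_j for i ≠ j). Then Σ_{k=1}^{r} x_k · ∏_{j=1, j≠k}^{r} (x_j − x_k + 1)/(x_j − x_k) = Σ_{k=1}^{r} x_k − r(r−1)/2. -/
open scoped BigOperators

open Finset Polynomial

lemma leadingCoeff_lagrange_basis (s : Finset ℕ) (v : ℕ → ℝ) (i : ℕ) :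
    (Lagrange.basis s v i).leadingCoeff = ∏ j ∈ s.erase i, (v i - v j)⁻¹ := by
  rw [Lagrange.basis, Polynomial.leadingCoeff_prod]
  refine Finset.prod_congr rfl fun j _ => ?_
  rw [Lagrange.basisDivisor, leadingCoeff_mul, leadingCoeff_C,
    (monic_X_sub_C (v j)).leadingCoeff, mul_one]

lemma key_divdiff (s : Finset ℕ) (v : ℕ → ℝ) (hvs : Set.InjOn v s) (hs : 2 ≤ s.card) :
    ∑ i ∈ s, v i * ∏ j ∈ s.erase i, (v i - v j)⁻¹ =
      if s.card = 2 then 1 else 0 := by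
  have hX : (X : ℝ[X]) = Lagrange.interpolate s v v := by
    have h2 : (X : ℝ[X]).degree < s.card := by
      rw [degree_X]
      exact_mod_cast lt_of_lt_of_le one_lt_two (by exact_mod_cast hs)
    have := Lagrange.eq_interpolate (f := (X : ℝ[X])) hvs h2
    simpa using this
  have hcoeff := congrArg (fun p => Polynomial.coeff p (s.card - 1)) hX
  simp only [Lagrange.interpolate_apply, Polynomial.finset_sum_coeff,
    Polynomial.coeff_C_mul] at hcoeff
  have hbasis : ∀ i ∈ s, (Lagrange.basis s v i).coeff (s.card - 1)
      = ∏ j ∈ s.erase i, (v i - v j)⁻¹ := by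
    intro i hi
    have hnd := Lagrange.natDegree_basis hvs hi
    rw [← hnd, Polynomial.coeff_natDegree, leadingCoeff_lagrange_basis]
  rw [Finset.sum_congr rfl (fun i hi => by rw [hbasis i hi])] at hcoeff
  rw [← hcoeff, Polynomial.coeff_X]
  rcases eq_or_ne s.card 2 with h | h
  · have : s.card - 1 = 1 := by omega
    simp [this, h]
  · have : s.card - 1 ≠ 1 := by omega
    simp [h, Ne.symm this]

lemma key_divdiff' (s : Finset ℕ) (v : ℕ → ℝ) (hvs : Set.InjOn v s) (hs : 2 ≤ s.card) :
    ∑ i ∈ s, v i * ∏ j ∈ s.erase i, (v j - v i)⁻¹ =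
      if s.card = 2 then -1 else 0 := by
  have h : ∀ i ∈ s, ∏ j ∈ s.erase i, (v j - v i)⁻¹
      = (-1 : ℝ) ^ (s.card - 1) * ∏ j ∈ s.erase i, (v i - v j)⁻¹ := by
    intro i hi
    rw [← Finset.card_erase_of_mem hi, ← Finset.prod_const, ← Finset.prod_mul_distrib]
    refine Finset.prod_congr rfl fun j _ => ?_
    rw [neg_one_mul, ← inv_neg, neg_sub]
  calc ∑ i ∈ s, v i * ∏ j ∈ s.erase i, (v j - v i)⁻¹
      = (-1 : ℝ) ^ (s.card - 1) * ∑ i ∈ s, v i * ∏ j ∈ s.erase i, (v i - v j)⁻¹ := by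
        rw [Finset.mul_sum]
        refine Finset.sum_congr rfl fun i hi => ?_
        rw [h i hi]; ring
    _ = _ := by
        rw [key_divdiff s v hvs hs]
        rcases eq_or_ne s.card 2 with h2 | h2 <;> simp [h2]

/-- **A rational-function identity.** For `r ≥ 1` pairwise distinct reals `x_1, …, x_r`,
`Σ_k x_k ∏_{j≠k} (x_j − x_k + 1)/(x_j − x_k) = Σ_k x_k − r(r−1)/2`. -/
theorem sum_prod_identity (r : ℕ) (hr : 1 ≤ r) (x : ℕ → ℝ)
    (hx : ∀ i j, i < r → j < r → i ≠ j → x i ≠ x j) :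
    ∑ k ∈ Finset.range r,
        x k * ∏ j ∈ (Finset.range r).erase k, (x j - x k + 1) / (x j - x k) =
      (∑ k ∈ Finset.range r, x k) - (r : ℝ) * ((r : ℝ) - 1) / 2 := by
  classical
  -- Step 1: expand each product via subsets
  have h1 : ∀ k ∈ Finset.range r,
      x k * ∏ j ∈ (Finset.range r).erase k, (x j - x k + 1) / (x j - x k)
      = ∑ S ∈ ((Finset.range r).erase k).powerset,
          x k * ∏ j ∈ S, (x j - x k)⁻¹ := by
    intro k hk
    rw [← Finset.mul_sum]
    congr 1
    calc ∏ j ∈ (Finset.range r).erase k, (x j - x k + 1) / (x j - x k)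
        = ∏ j ∈ (Finset.range r).erase k, ((x j - x k)⁻¹ + 1) := by
          refine Finset.prod_congr rfl fun j hj => ?_
          have hjk : j ≠ k := (Finset.mem_erase.mp hj).1
          have hjr := Finset.mem_range.mp (Finset.mem_erase.mp hj).2
          have hne : x j - x k ≠ 0 :=
            sub_ne_zero.mpr (hx j k hjr (Finset.mem_range.mp hk) hjk)
          field_simp
          ring
      _ = ∑ S ∈ ((Finset.range r).erase k).powerset,
            (∏ j ∈ S, (x j - x k)⁻¹) * ∏ j ∈ ((Finset.range r).erase k) \ S, (1 : ℝ) :=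
          Finset.prod_add _ _ _
      _ = ∑ S ∈ ((Finset.range r).erase k).powerset, ∏ j ∈ S, (x j - x k)⁻¹ := by simp
  rw [Finset.sum_congr rfl h1, Finset.sum_sigma' (Finset.range r)
    (fun k => ((Finset.range r).erase k).powerset)
    (fun k S => x k * ∏ j ∈ S, (x j - x k)⁻¹)]
  -- Step 2: reindex pairs (k, S) ↦ (insert k S, k)
  have hbij : ∑ p ∈ (Finset.range r).sigma (fun k => ((Finset.range r).erase k).powerset),
        x p.1 * ∏ j ∈ p.2, (x j - x p.1)⁻¹
      = ∑ q ∈ ((Finset.range r).powerset.sigma (fun T => T)),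
        x q.2 * ∏ j ∈ q.1.erase q.2, (x j - x q.2)⁻¹ := by
    refine Finset.sum_nbij' (fun p => ⟨insert p.1 p.2, p.1⟩) (fun q => ⟨q.2, q.1.erase q.2⟩)
      ?_ ?_ ?_ ?_ ?_
    · rintro ⟨k, S⟩ hp
      rw [Finset.mem_sigma] at hp ⊢
      obtain ⟨hk, hS⟩ := hp
      rw [Finset.mem_powerset] at hS
      refine ⟨Finset.mem_powerset.mpr ?_, Finset.mem_insert_self _ _⟩
      exact Finset.insert_subset hk (hS.trans (Finset.erase_subset _ _))
    · rintro ⟨T, k⟩ hq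
      rw [Finset.mem_sigma] at hq ⊢
      obtain ⟨hT, hk⟩ := hq
      rw [Finset.mem_powerset] at hT
      exact ⟨hT hk, Finset.mem_powerset.mpr (Finset.erase_subset_erase _ hT)⟩
    · rintro ⟨k, S⟩ hp
      rw [Finset.mem_sigma] at hp
      have hkS : k ∉ S := fun h =>
        (Finset.mem_erase.mp (Finset.mem_powerset.mp hp.2 h)).1 rfl
      simp [Finset.erase_insert hkS]
    · rintro ⟨T, k⟩ hq
      rw [Finset.mem_sigma] at hq
      simp [Finset.insert_erase hq.2]
    · rintro ⟨k, S⟩ hp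
      rw [Finset.mem_sigma] at hp
      have hkS : k ∉ S := fun h =>
        (Finset.mem_erase.mp (Finset.mem_powerset.mp hp.2 h)).1 rfl
      simp [Finset.erase_insert hkS]
  rw [hbij, Finset.sum_sigma]
  -- Step 3: evaluate the inner sums
  have hinj : ∀ T ∈ (Finset.range r).powerset, Set.InjOn x T := by
    intro T hT i hi j hj hxy
    rw [Finset.mem_powerset] at hT
    by_contra hij
    exact hx i j (Finset.mem_range.mp (hT hi)) (Finset.mem_range.mp (hT hj)) hij hxy
  have hinner : ∀ T ∈ (Finset.range r).powerset,
      (∑ k ∈ T, x k * ∏ j ∈ T.erase k, (x j - x k)⁻¹)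
      = (if T.card = 1 then ∑ k ∈ T, x k else 0)
        + (if T.card = 2 then -1 else 0) := by
    intro T hT
    rcases lt_or_ge T.card 2 with h2 | h2
    · interval_cases h : T.card
      · rw [Finset.card_eq_zero.mp h]; simp
      · obtain ⟨a, rfl⟩ := Finset.card_eq_one.mp h
        simp
    · rw [key_divdiff' T x (hinj T hT) h2]
      have h1 : T.card ≠ 1 := by omega
      simp [h1]
  rw [Finset.sum_congr rfl hinner, Finset.sum_powerset]
  -- Step 4: evaluate the sum over cardinalities
  have hcard : ∀ j, ∑ T ∈ Finset.powersetCard j (Finset.range r),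
      ((if T.card = 1 then ∑ k ∈ T, x k else 0) + (if T.card = 2 then -1 else 0))
      = (if j = 1 then ∑ k ∈ Finset.range r, x k else 0)
        + (if j = 2 then -((r.choose 2 : ℕ) : ℝ) else 0) := by
    intro j
    have hc : ∀ T ∈ Finset.powersetCard j (Finset.range r), T.card = j :=
      fun T hT => (Finset.mem_powersetCard.mp hT).2
    rcases eq_or_ne j 1 with rfl | hj1
    · rw [Finset.powersetCard_one]
      simp [Finset.sum_map]
    rcases eq_or_ne j 2 with rfl | hj2
    · calc ∑ T ∈ Finset.powersetCard 2 (Finset.range r),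
            ((if T.card = 1 then ∑ k ∈ T, x k else 0) + (if T.card = 2 then -1 else 0))
          = ∑ _T ∈ Finset.powersetCard 2 (Finset.range r), (-1 : ℝ) :=
            Finset.sum_congr rfl fun T hT => by rw [hc T hT]; norm_num
        _ = _ := by
            rw [Finset.sum_const, Finset.card_powersetCard, Finset.card_range]
            simp
    · calc ∑ T ∈ Finset.powersetCard j (Finset.range r),
            ((if T.card = 1 then ∑ k ∈ T, x k else 0) + (if T.card = 2 then -1 else 0))
          = ∑ _T ∈ Finset.powersetCard j (Finset.range r), (0 : ℝ) :=
            Finset.sum_congr rfl fun T hT => by rw [hc T hT]; simp [hj1, hj2]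
        _ = _ := by simp [hj1, hj2]
  rw [Finset.sum_congr rfl (fun j _ => hcard j), Finset.sum_add_distrib,
    Finset.sum_ite_eq' _ 1, Finset.sum_ite_eq' _ 2, Finset.card_range]
  have h1mem : (1 : ℕ) ∈ Finset.range (r + 1) := Finset.mem_range.mpr (by omega)
  rw [if_pos h1mem]
  have hfin : (if (2 : ℕ) ∈ Finset.range (r + 1) then -((r.choose 2 : ℕ) : ℝ) else 0)
      = -((r : ℝ) * ((r : ℝ) - 1) / 2) := by
    rcases lt_or_ge r 2 with hr2 | hr2
    · interval_cases r
      · simp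
    · rw [if_pos (Finset.mem_range.mpr (by omega)), Nat.cast_choose_two]
  rw [hfin]
  ring
end

section
/- Let r1, r2 be non-negative integers, r = r1+r2, let R_1,…,R_r be nonzero real polynomials, and let 0 ≤ l_1 < l_2 < ⋯ < l_r be integers. Define Q(x) = e^{−r2·x} · det M(x), where M(x) is the r×r matrix whose (i,j) entry is the l_i-th derivative at x of the function R_j for j = 1,…,r1, and of the function x ↦ e^x R_j(x) for j = r1+1,…,r. Then Q coincides with a polynomial of degree at most Σ_{i=1}^{r} deg R_i − Σ_{i=1}^{r1} l_i − r2(r2−1)/2 (in particular this holds if Q ≡ 0). -/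
open scoped BigOperators

open Polynomial Matrix

/-- The operator `p ↦ (1 + d/dX)^n p`, which governs derivatives of `e^x · p(x)`. -/
noncomputable def gwT (n : ℕ) (p : ℝ[X]) : ℝ[X] :=
  (((derivative : Module.End ℝ ℝ[X]) + 1) ^ n) p

lemma gwT_succ (n : ℕ) (p : ℝ[X]) :
    gwT (n + 1) p = gwT n p + derivative (gwT n p) := by
  unfold gwT
  rw [pow_succ']
  simp [Module.End.mul_apply, LinearMap.add_apply, add_comm]

lemma gwT_eq_sum (n K : ℕ) (h : n < K) (p : ℝ[X]) :
    gwT n p = ∑ k ∈ Finset.range K, (n.choose k : ℝ[X]) * (⇑derivative)^[k] p := by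
  have hc : Commute (derivative : Module.End ℝ ℝ[X]) 1 := Commute.one_right _
  have hpow := hc.add_pow n
  unfold gwT
  rw [hpow, LinearMap.sum_apply]
  have step : ∀ k, ((derivative : Module.End ℝ ℝ[X]) ^ k * 1 ^ (n - k) *
      (n.choose k : Module.End ℝ ℝ[X])) p
      = (n.choose k : ℝ[X]) * (⇑derivative)^[k] p := by
    intro k
    rw [one_pow, mul_one, Module.End.mul_apply, Module.End.natCast_apply, map_nsmul,
      Module.End.pow_apply, nsmul_eq_mul]
  simp_rw [step]
  apply Finset.sum_subset (Finset.range_subset_range.2 h)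
  intro k _ hk
  rw [Nat.choose_eq_zero_of_lt (by simpa using hk)]
  simp

lemma iteratedDeriv_polyEval (n : ℕ) (p : ℝ[X]) :
    iteratedDeriv n (fun y => p.eval y) = fun x => ((⇑derivative)^[n] p).eval x := by
  induction n with
  | zero => simp [iteratedDeriv_zero]
  | succ m ih =>
      rw [iteratedDeriv_succ, ih]
      funext x
      rw [Function.iterate_succ_apply']
      exact Polynomial.deriv _

lemma iteratedDeriv_expMulPolyEval (n : ℕ) (p : ℝ[X]) :
    iteratedDeriv n (fun y => Real.exp y * p.eval y)
      = fun x => Real.exp x * (gwT n p).eval x := by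
  induction n with
  | zero => simp [iteratedDeriv_zero, gwT]
  | succ m ih =>
      rw [iteratedDeriv_succ, ih]
      funext x
      rw [deriv_fun_mul Real.differentiableAt_exp (Polynomial.differentiableAt _),
        Real.deriv_exp, Polynomial.deriv, gwT_succ]
      simp only [eval_add]
      ring

/-- Sum of a function monotone below `N` over a finset of naturals `< N`
is at least the sum over an initial segment of the same size. -/
lemma gw_sorted_sum (g : ℕ → ℕ) (N : ℕ)
    (hg : ∀ a b, a ≤ b → b < N → g a ≤ g b) :
    ∀ (n : ℕ) (S : Finset ℕ), S.card = n → (∀ i ∈ S, i < N) →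
      ∑ t ∈ Finset.range n, g t ≤ ∑ i ∈ S, g i := by
  intro n
  induction n with
  | zero => intro S _ _; simp
  | succ m ih =>
      intro S hcard hSN
      have hne : S.Nonempty := Finset.card_pos.mp (by omega)
      set M := S.max' hne with hM
      have hMS : M ∈ S := S.max'_mem hne
      have hsub : S ⊆ Finset.range (M + 1) := by
        intro a ha
        simp only [Finset.mem_range]
        exact Nat.lt_succ_of_le (S.le_max' a ha)
      have hcard' : S.card ≤ M + 1 := (Finset.card_le_card hsub).trans (by simp)
      have hmM : m ≤ M := by omega
      have herase : (S.erase M).card = m := by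
        rw [Finset.card_erase_of_mem hMS, hcard]; omega
      have hkey := ih (S.erase M) herase (fun i hi => hSN i (Finset.mem_of_mem_erase hi))
      have hsplit : ∑ i ∈ S, g i = g M + ∑ i ∈ S.erase M, g i :=
        (Finset.add_sum_erase S g hMS).symm
      rw [Finset.sum_range_succ, hsplit]
      have : g m ≤ g M := hg m M hmM (hSN M hMS)
      omega

/-- **Degree bound for a generalized Wronskian-type determinant.** For polynomials
`R_1, …, R_r` (`r = r₁ + r₂`) and integers `0 ≤ l_1 < ⋯ < l_r`, the function
`Q(x) = e^{−r₂x} det(M(x))`, whose `(i,j)` entry is the `l_i`-th derivative of `R_j`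
(for `j ≤ r₁`) resp. of `e^x R_j` (for `j > r₁`), is a polynomial of degree at most
`Σ deg R_i − Σ_{i≤r₁} l_i − C(r₂,2)` (with the convention `deg 0 = −∞`). -/
theorem generalized_wronskian_degree_bound (r1 r2 : ℕ) (R : ℕ → Polynomial ℝ)
    (hR0 : ∀ i, i < r1 + r2 → R i ≠ 0)
    (l : ℕ → ℕ) (hl : ∀ i j, i < j → j < r1 + r2 → l i < l j) :
    ∃ P : Polynomial ℝ,
      (∀ x : ℝ, P.eval x =
        Real.exp (-(r2 : ℝ) * x) *
          Matrix.det (Matrix.of fun i j : Fin (r1 + r2) =>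
            if (j : ℕ) < r1 then
              iteratedDeriv (l (i : ℕ)) (fun y => (R (j : ℕ)).eval y) x
            else
              iteratedDeriv (l (i : ℕ)) (fun y => Real.exp y * (R (j : ℕ)).eval y) x)) ∧
      (P = 0 ∨
        (P.natDegree : ℤ) ≤
          (∑ i ∈ Finset.range (r1 + r2), ((R i).natDegree : ℤ)) -
            (∑ i ∈ Finset.range r1, (l i : ℤ)) - (r2 : ℤ) * ((r2 : ℤ) - 1) / 2) := by
  classical
  set r := r1 + r2 with hr
  set K := ((Finset.range r).sup l) + 1 with hKdef
  have hK : ∀ i : Fin r, l i < K :=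
    fun i => Nat.lt_succ_of_le (Finset.le_sup (Finset.mem_range.2 i.isLt))
  set N : Matrix (Fin r) (Fin r) ℝ[X] :=
    Matrix.of (fun i j : Fin r =>
      if (j : ℕ) < r1 then (⇑derivative)^[l i] (R j) else gwT (l i) (R j)) with hN
  refine ⟨N.det, ?_, ?_⟩
  · -- evaluation identity
    intro x
    have hMeq : (Matrix.of fun i j : Fin r =>
        if (j : ℕ) < r1 then
          iteratedDeriv (l (i : ℕ)) (fun y => (R (j : ℕ)).eval y) x
        else
          iteratedDeriv (l (i : ℕ)) (fun y => Real.exp y * (R (j : ℕ)).eval y) x)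
        = Matrix.of fun i j : Fin r =>
            (if (j : ℕ) < r1 then (1:ℝ) else Real.exp x) * (N.map (eval x)) i j := by
      ext i j
      by_cases h : (j : ℕ) < r1 <;>
        simp [hN, h, Matrix.map_apply, iteratedDeriv_polyEval, iteratedDeriv_expMulPolyEval]
    rw [hMeq, Matrix.det_mul_row]
    have hprod : (∏ j : Fin r, (if (j : ℕ) < r1 then (1:ℝ) else Real.exp x))
        = Real.exp x ^ r2 := by
      rw [Fin.prod_univ_eq_prod_range (fun m => if m < r1 then (1:ℝ) else Real.exp x) r, hr,
        Finset.prod_range_add]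
      have h1 : (∏ m ∈ Finset.range r1, (if m < r1 then (1:ℝ) else Real.exp x)) = 1 :=
        Finset.prod_eq_one (fun m hm => by simp [Finset.mem_range.1 hm])
      have h2 : (∏ m ∈ Finset.range r2, (if r1 + m < r1 then (1:ℝ) else Real.exp x))
          = Real.exp x ^ r2 := by
        have he : ∀ m ∈ Finset.range r2,
            (if r1 + m < r1 then (1:ℝ) else Real.exp x) = Real.exp x :=
          fun m _ => if_neg (by omega)
        rw [Finset.prod_congr rfl he, Finset.prod_const, Finset.card_range]
      rw [h1, h2, one_mul]
    have hdetmap : (N.map (eval x)).det = eval x N.det := by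
      have := (Polynomial.evalRingHom x).map_det N
      simpa [RingHom.mapMatrix_apply, Polynomial.coe_evalRingHom] using this.symm
    rw [hprod, hdetmap, ← Real.exp_nat_mul, ← mul_assoc, ← Real.exp_add]
    have h0 : -(r2:ℝ) * x + (r2:ℝ) * x = 0 := by ring
    rw [h0, Real.exp_zero, one_mul]
  · -- degree bound
    set B : ℤ := (∑ i ∈ Finset.range r, ((R i).natDegree : ℤ)) -
        (∑ i ∈ Finset.range r1, (l i : ℤ)) - (r2 : ℤ) * ((r2 : ℤ) - 1) / 2 with hB
    set A : Fin r → Finset ℕ := fun j => if (j : ℕ) < r1 then {0} else Finset.range K with hA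
    set g : Fin r → ℕ → (Fin r → ℝ[X]) := fun j k i =>
      if (j : ℕ) < r1 then (⇑derivative)^[l i] (R j)
      else ((l i).choose k : ℝ[X]) * (⇑derivative)^[k] (R j) with hg
    have hrow : (Nᵀ : Matrix (Fin r) (Fin r) ℝ[X]) = fun j => ∑ k ∈ A j, g j k := by
      funext j i
      by_cases h : (j : ℕ) < r1
      · simp [hN, hA, hg, h, Matrix.transpose_apply, Finset.sum_apply]
      · simp only [Matrix.transpose_apply, hN, Matrix.of_apply, if_neg h, hA, hg,
          Finset.sum_apply, if_neg h]
        exact gwT_eq_sum (l i) K (hK i) (R j)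
    have hdet : N.det = ∑ f ∈ Fintype.piFinset A,
        Matrix.det (Matrix.of fun j i => g j (f j) i) := by
      calc N.det = Nᵀ.det := (Matrix.det_transpose N).symm
        _ = Matrix.detRowAlternating.toMultilinearMap (fun j => ∑ k ∈ A j, g j k) := by
            rw [← hrow]; rfl
        _ = ∑ f ∈ Fintype.piFinset A,
            Matrix.detRowAlternating.toMultilinearMap (fun j => g j (f j)) :=
          MultilinearMap.map_sum_finset _ g A
        _ = ∑ f ∈ Fintype.piFinset A, Matrix.det (Matrix.of fun j i => g j (f j) i) := rfl
    -- cardinality facts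
    have hcardLT : (Finset.univ.filter fun i : Fin r => (i : ℕ) < r1).card = r1 := by
      rw [Finset.card_filter,
        Fin.sum_univ_eq_sum_range (fun m => if m < r1 then (1:ℕ) else 0) r, hr,
        Finset.sum_range_add]
      have e1 : ∀ m ∈ Finset.range r1, (if m < r1 then (1:ℕ) else 0) = 1 :=
        fun m hm => if_pos (Finset.mem_range.1 hm)
      have e2 : ∀ m ∈ Finset.range r2, (if r1 + m < r1 then (1:ℕ) else 0) = 0 :=
        fun m _ => if_neg (by omega)
      rw [Finset.sum_congr rfl e1, Finset.sum_congr rfl e2, Finset.sum_const,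
        Finset.sum_const, Finset.card_range]
      simp
    have hcardGE : (Finset.univ.filter fun i : Fin r => ¬ (i : ℕ) < r1).card = r2 := by
      have := Finset.card_filter_add_card_filter_not
        (s := (Finset.univ : Finset (Fin r))) (fun i : Fin r => (i : ℕ) < r1)
      rw [Finset.card_univ, Fintype.card_fin] at this
      rw [hcardLT] at this
      omega
    -- each summand is zero or has degree at most B
    have hmain : ∀ f ∈ Fintype.piFinset A,
        (Matrix.det (Matrix.of fun j i => g j (f j) i) = 0 ∨
          ((Matrix.det (Matrix.of fun j i => g j (f j) i)).natDegree : ℤ) ≤ B) := by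
      intro f hf
      by_cases hinj : ∀ j1 j2 : Fin r, ¬ ((j1 : ℕ) < r1) → ¬ ((j2 : ℕ) < r1) →
          f j1 = f j2 → j1 = j2
      · -- injective case : degree bound
        set Mf : Matrix (Fin r) (Fin r) ℝ[X] := Matrix.of (fun j i => g j (f j) i) with hMf
        by_cases hz : Mf.det = 0
        · exact Or.inl hz
        right
        -- per-permutation bound
        have hterm : ∀ σ : Equiv.Perm (Fin r),
            ((((Equiv.Perm.sign σ : ℤ) : ℝ[X]) * ∏ i, Mfᵀ (σ i) i) = 0) ∨
            (((((Equiv.Perm.sign σ : ℤ) : ℝ[X]) * ∏ i, Mfᵀ (σ i) i).natDegree : ℤ) ≤ B) := by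
          intro σ
          by_cases ht : (((Equiv.Perm.sign σ : ℤ) : ℝ[X]) * ∏ i, Mfᵀ (σ i) i) = 0
          · exact Or.inl ht
          right
          have hprodeq : (∏ i, Mfᵀ (σ i) i) = ∏ i, g i (f i) (σ i) :=
            Finset.prod_congr rfl (fun i _ => rfl)
          have hq : (∏ i, g i (f i) (σ i)) ≠ 0 :=
            fun h0 => ht (by rw [hprodeq, h0, mul_zero])
          have hfac : ∀ i : Fin r, g i (f i) (σ i) ≠ 0 := by
            have := Finset.prod_ne_zero_iff.mp hq
            exact fun i => this i (Finset.mem_univ i)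
          have hfacbd : ∀ i : Fin r, ((g i (f i) (σ i)).natDegree : ℤ) ≤
              ((R i).natDegree : ℤ) -
                (if (i : ℕ) < r1 then (l (σ i) : ℤ) else (f i : ℤ)) := by
            intro i
            by_cases h : (i : ℕ) < r1
            · have hne0 : (⇑derivative)^[l (σ i)] (R i) ≠ 0 := by
                have := hfac i; simpa [hg, h] using this
              have hle : l (σ i) ≤ (R i).natDegree := by
                by_contra hlt
                exact hne0 (Polynomial.iterate_derivative_eq_zero (by omega))
              have h1 : ((⇑derivative)^[l (σ i)] (R i)).natDegree
                  ≤ (R i).natDegree - l (σ i) :=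
                Polynomial.natDegree_iterate_derivative _ _
              have h2 : (((⇑derivative)^[l (σ i)] (R i)).natDegree : ℤ)
                  ≤ (((R i).natDegree - l (σ i) : ℕ) : ℤ) := by exact_mod_cast h1
              rw [Nat.cast_sub hle] at h2
              simpa [hg, if_pos h] using h2
            · have hne0 : ((l (σ i)).choose (f i) : ℝ[X]) * (⇑derivative)^[f i] (R i) ≠ 0 := by
                have := hfac i; simpa [hg, h] using this
              have hD : (⇑derivative)^[f i] (R i) ≠ 0 := fun h0 => hne0 (by rw [h0, mul_zero])
              have hle : f i ≤ (R i).natDegree := by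
                by_contra hlt
                exact hD (Polynomial.iterate_derivative_eq_zero (by omega))
              have h1 : (((l (σ i)).choose (f i) : ℝ[X]) * (⇑derivative)^[f i] (R i)).natDegree
                  ≤ (R i).natDegree - f i := by
                refine le_trans Polynomial.natDegree_mul_le ?_
                rw [Polynomial.natDegree_natCast, zero_add]
                exact Polynomial.natDegree_iterate_derivative _ _
              have h2 : ((((l (σ i)).choose (f i) : ℝ[X]) * (⇑derivative)^[f i] (R i)).natDegree : ℤ)
                  ≤ (((R i).natDegree - f i : ℕ) : ℤ) := by exact_mod_cast h1
              rw [Nat.cast_sub hle] at h2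
              simpa [hg, if_neg h] using h2
          have hqdeg : ((∏ i, g i (f i) (σ i)).natDegree : ℤ)
              = ∑ i : Fin r, ((g i (f i) (σ i)).natDegree : ℤ) := by
            rw [Polynomial.natDegree_prod _ _ (fun i _ => hfac i)]
            push_cast
            rfl
          have hsumbd : ∑ i : Fin r, ((g i (f i) (σ i)).natDegree : ℤ)
              ≤ (∑ i : Fin r, ((R i).natDegree : ℤ)) -
                ∑ i : Fin r, (if (i : ℕ) < r1 then (l (σ i) : ℤ) else (f i : ℤ)) := by
            rw [← Finset.sum_sub_distrib]
            exact Finset.sum_le_sum (fun i _ => hfacbd i)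
          have hRsum : ∑ i : Fin r, ((R i).natDegree : ℤ)
              = ∑ i ∈ Finset.range r, ((R i).natDegree : ℤ) :=
            Fin.sum_univ_eq_sum_range (fun m => ((R m).natDegree : ℤ)) r
          have hite : ∑ i : Fin r, (if (i : ℕ) < r1 then (l (σ i) : ℤ) else (f i : ℤ))
              = (∑ i ∈ Finset.univ.filter (fun i : Fin r => (i : ℕ) < r1), (l (σ i) : ℤ))
                + ∑ i ∈ Finset.univ.filter (fun i : Fin r => ¬ (i : ℕ) < r1), (f i : ℤ) :=
            Finset.sum_ite _ _
          have hmono : ∀ a b, a ≤ b → b < r → l a ≤ l b := by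
            intro a b hab hbr
            rcases eq_or_lt_of_le hab with h | h
            · rw [h]
            · exact (hl a b h hbr).le
          have hS1 : ∑ t ∈ Finset.range r1, l t ≤
              ∑ i ∈ Finset.univ.filter (fun i : Fin r => (i : ℕ) < r1), l (σ i) := by
            have hinjv : ∀ x ∈ Finset.univ.filter (fun i : Fin r => (i : ℕ) < r1),
                ∀ y ∈ Finset.univ.filter (fun i : Fin r => (i : ℕ) < r1),
                ((σ x : Fin r) : ℕ) = ((σ y : Fin r) : ℕ) → x = y :=
              fun x _ y _ h => σ.injective (Fin.val_injective h)
            have hcardS : ((Finset.univ.filter (fun i : Fin r => (i : ℕ) < r1)).image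
                (fun i => ((σ i : Fin r) : ℕ))).card = r1 := by
              rw [Finset.card_image_of_injOn (fun x hx y hy h => hinjv x hx y hy h), hcardLT]
            have hbd : ∀ m ∈ (Finset.univ.filter (fun i : Fin r => (i : ℕ) < r1)).image
                (fun i => ((σ i : Fin r) : ℕ)), m < r := by
              intro m hm
              obtain ⟨i, _, rfl⟩ := Finset.mem_image.1 hm
              exact (σ i).isLt
            have := gw_sorted_sum l r hmono r1 _ hcardS hbd
            rwa [Finset.sum_image hinjv] at this
          have hS2 : ∑ t ∈ Finset.range r2, t ≤
              ∑ i ∈ Finset.univ.filter (fun i : Fin r => ¬ (i : ℕ) < r1), f i := by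
            have hinjf : ∀ x ∈ Finset.univ.filter (fun i : Fin r => ¬ (i : ℕ) < r1),
                ∀ y ∈ Finset.univ.filter (fun i : Fin r => ¬ (i : ℕ) < r1),
                f x = f y → x = y :=
              fun x hx y hy h =>
                hinj x y (Finset.mem_filter.1 hx).2 (Finset.mem_filter.1 hy).2 h
            have hcardS : ((Finset.univ.filter (fun i : Fin r => ¬ (i : ℕ) < r1)).image f).card
                = r2 := by
              rw [Finset.card_image_of_injOn (fun x hx y hy h => hinjf x hx y hy h), hcardGE]
            have hbd : ∀ m ∈ (Finset.univ.filter (fun i : Fin r => ¬ (i : ℕ) < r1)).image f,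
                m < K := by
              intro m hm
              obtain ⟨i, hi, rfl⟩ := Finset.mem_image.1 hm
              have hAi := Fintype.mem_piFinset.1 hf i
              rw [hA] at hAi
              simp only [if_neg (Finset.mem_filter.1 hi).2] at hAi
              exact Finset.mem_range.1 hAi
            have := gw_sorted_sum (fun t => t) K (fun a b hab _ => hab) r2 _ hcardS hbd
            rwa [Finset.sum_image hinjf] at this
          have c1 : (∑ t ∈ Finset.range r1, (l t : ℤ)) ≤
              ∑ i ∈ Finset.univ.filter (fun i : Fin r => (i : ℕ) < r1), (l (σ i) : ℤ) := by
            exact_mod_cast hS1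
          have c2 : ((∑ t ∈ Finset.range r2, t : ℕ) : ℤ) ≤
              ∑ i ∈ Finset.univ.filter (fun i : Fin r => ¬ (i : ℕ) < r1), (f i : ℤ) := by
            exact_mod_cast hS2
          have c3 : (r2 : ℤ) * ((r2 : ℤ) - 1) / 2 ≤
              ∑ i ∈ Finset.univ.filter (fun i : Fin r => ¬ (i : ℕ) < r1), (f i : ℤ) := by
            have hg2 : (∑ t ∈ Finset.range r2, t) * 2 = r2 * (r2 - 1) :=
              Finset.sum_range_id_mul_two r2
            have hg2' : ((∑ t ∈ Finset.range r2, t : ℕ) : ℤ) * 2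
                = (r2 : ℤ) * ((r2 : ℤ) - 1) := by
              rcases Nat.eq_zero_or_pos r2 with h0 | hpos
              · subst h0; simp
              · have h1 : ((r2 : ℤ) - 1) = ((r2 - 1 : ℕ) : ℤ) := by omega
                rw [h1]
                exact_mod_cast hg2
            omega
          have hdegt : (((((Equiv.Perm.sign σ : ℤ) : ℝ[X]) * ∏ i, Mfᵀ (σ i) i).natDegree : ℤ))
              ≤ ((∏ i, g i (f i) (σ i)).natDegree : ℤ) := by
            rw [hprodeq]
            have h1 : ((((Equiv.Perm.sign σ : ℤ) : ℝ[X]) * ∏ i, g i (f i) (σ i)).natDegree)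
                ≤ (∏ i, g i (f i) (σ i)).natDegree := by
              refine le_trans Polynomial.natDegree_mul_le ?_
              rw [Polynomial.natDegree_intCast, zero_add]
            exact_mod_cast h1
          rw [hB]
          linarith [hdegt, hqdeg, hsumbd, hRsum, hite, c1, c3]
        have hdetMf : Mf.det = ∑ σ : Equiv.Perm (Fin r),
            (((Equiv.Perm.sign σ : ℤ) : ℝ[X]) * ∏ i, Mfᵀ (σ i) i) := by
          rw [← Matrix.det_transpose Mf, Matrix.det_apply']
        have hB0 : 0 ≤ B := by
          have hex : ∃ σ ∈ (Finset.univ : Finset (Equiv.Perm (Fin r))),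
              (((Equiv.Perm.sign σ : ℤ) : ℝ[X]) * ∏ i, Mfᵀ (σ i) i) ≠ 0 := by
            apply Finset.exists_ne_zero_of_sum_ne_zero
            rw [← hdetMf]; exact hz
          obtain ⟨σ, _, hσ⟩ := hex
          rcases hterm σ with h | h
          · exact absurd h hσ
          · exact le_trans (by positivity) h
        have : Mf.det.natDegree ≤ B.toNat := by
          rw [hdetMf]
          apply Polynomial.natDegree_sum_le_of_forall_le
          intro σ _
          rcases hterm σ with h | h
          · rw [h]; simp
          · omega
        calc (Mf.det.natDegree : ℤ) ≤ (B.toNat : ℤ) := by exact_mod_cast this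
          _ = B := Int.toNat_of_nonneg hB0
      · -- non-injective case : determinant vanishes
        left
        push_neg at hinj
        obtain ⟨j1, j2, hj1, hj2, hfe, hne⟩ := hinj
        set c : Fin r → ℝ[X] := fun j =>
          if (j : ℕ) < r1 then 1 else (⇑derivative)^[f j] (R j) with hc
        set w : Fin r → Fin r → ℝ[X] := fun j i =>
          if (j : ℕ) < r1 then (⇑derivative)^[l i] (R j)
          else ((l i).choose (f j) : ℝ[X]) with hw
        have hsplit : (fun j => g j (f j)) = fun j => c j • w j := by
          funext j
          funext i
          by_cases h : (j : ℕ) < r1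
          · simp [hg, hc, hw, h, Pi.smul_apply, smul_eq_mul]
          · simp only [hg, hc, hw, if_neg h, Pi.smul_apply, smul_eq_mul]
            ring
        have hweq : w j1 = w j2 := by
          funext i
          simp [hw, if_neg (Nat.not_lt.mpr hj1), if_neg (Nat.not_lt.mpr hj2), hfe]
        have hw0 : Matrix.detRowAlternating (R := ℝ[X]) (n := Fin r) w = 0 :=
          AlternatingMap.map_eq_zero_of_eq _ w hweq hne
        calc Matrix.det (Matrix.of fun j i => g j (f j) i)
            = Matrix.detRowAlternating (fun j => g j (f j)) := rfl
          _ = Matrix.detRowAlternating.toMultilinearMap (fun j => c j • w j) := by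
              rw [hsplit]; rfl
          _ = (∏ j, c j) • Matrix.detRowAlternating.toMultilinearMap w :=
              MultilinearMap.map_smul_univ _ c w
          _ = 0 := by
              have : Matrix.detRowAlternating.toMultilinearMap w
                  = Matrix.detRowAlternating (R := ℝ[X]) (n := Fin r) w := rfl
              rw [this, hw0, smul_zero]
    -- assemble
    by_cases hP : N.det = 0
    · exact Or.inl hP
    right
    have hex : ∃ f ∈ Fintype.piFinset A,
        Matrix.det (Matrix.of fun j i => g j (f j) i) ≠ 0 := by
      apply Finset.exists_ne_zero_of_sum_ne_zero
      rw [← hdet]; exact hP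
    obtain ⟨f0, hf0mem, hf0⟩ := hex
    have hB0 : 0 ≤ B := by
      rcases hmain f0 hf0mem with h | h
      · exact absurd h hf0
      · exact le_trans (by positivity) h
    have hboundN : N.det.natDegree ≤ B.toNat := by
      rw [hdet]
      apply Polynomial.natDegree_sum_le_of_forall_le
      intro f hf
      rcases hmain f hf with h | h
      · simp [h]
      · omega
    calc (N.det.natDegree : ℤ) ≤ (B.toNat : ℤ) := by exact_mod_cast hboundN
      _ = B := Int.toNat_of_nonneg hB0
end

section
/- Let m ≥ 1 and n ≥ m be integers and let α ∈ ℝ. Define the type I X_m-Laguerre polynomial L_{m,n}^{I,α}(x) = L_m^{(α)}(−x) · L_{n−m}^{(α−1)}(x) + L_{n−m−1}^{(α)}(x) · L_m^{(α−1)}(−x) (the determinant of the 2×2 matrix with rows [L_m^{(α)}(−x), −L_{n−m−1}^{(α)}(x)] and [L_m^{(α−1)}(−x), L_{n−m}^{(α−1)}(x)], with the convention L_{−1}^{(α)} ≡ 0). Then for all x, L_{m,n}^{I,α}(x) = −L_{∅,(m),n}^{(α−1)}(x), where ∅ is the empty partition and (m) is the partition with a single part equal to m. -/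
open scoped BigOperators

/-- The empty partition. -/
def emptyPartition : PartitionSeq :=
  ⟨0, fun _ => 1, fun i hi => absurd hi (Nat.not_lt_zero i),
    fun _ j _ hj => absurd hj (Nat.not_lt_zero j)⟩

/-- The constant partition with `len` parts all equal to `m ≥ 1`. -/
def constPartition (m len : ℕ) (hm : 1 ≤ m) : PartitionSeq :=
  ⟨len, fun _ => m, fun _ _ => hm, fun _ _ _ _ => le_refl m⟩

noncomputable def lagC (α : ℝ) (N k : ℕ) : ℝ :=
  ((-1 : ℝ) ^ k / (Nat.factorial k : ℝ)) *
    ((∏ i ∈ Finset.Icc (k + 1) N, (α + (i : ℝ))) / (Nat.factorial (N - k) : ℝ))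

lemma laguerre_natCast (α : ℝ) (N : ℕ) (x : ℝ) :
    laguerre α (N : ℤ) x = ∑ k ∈ Finset.range (N + 1), lagC α N k * x ^ k := by
  simp [laguerre, lagC]

lemma laguerre_of_neg (α : ℝ) {n : ℤ} (h : n < 0) (x : ℝ) : laguerre α n x = 0 := by
  simp [laguerre, h]

lemma prod_shift_s18 (α : ℝ) (k N : ℕ) (hN : 1 ≤ N) :
    ∏ i ∈ Finset.Icc (k + 1) (N - 1), (α + 1 + (i : ℝ)) =
      ∏ i ∈ Finset.Icc (k + 2) N, (α + (i : ℝ)) := by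
  have h : Finset.Icc (k + 2) N = (Finset.Icc (k + 1) (N - 1)).map (addRightEmbedding 1) := by
    rw [Finset.map_add_right_Icc]
    congr 1
    omega
  rw [h, Finset.prod_map]
  apply Finset.prod_congr rfl
  intro i _
  simp only [addRightEmbedding_apply]
  push_cast
  ring

lemma icc_insert_bot {a b : ℕ} (h : a ≤ b) :
    Finset.Icc a b = insert a (Finset.Icc (a + 1) b) := by
  ext i
  simp only [Finset.mem_Icc, Finset.mem_insert]
  omega

lemma icc_insert_top {a b : ℕ} (h : a ≤ b) :
    Finset.Icc a b = insert b (Finset.Icc a (b - 1)) := by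
  ext i
  simp only [Finset.mem_Icc, Finset.mem_insert]
  omega

lemma lagC_deriv (α : ℝ) {N k : ℕ} (h : k < N) :
    lagC α N (k + 1) * (k + 1) = - lagC (α + 1) (N - 1) k := by
  have h1 : N - (k + 1) = N - 1 - k := by omega
  have hfk : (Nat.factorial k : ℝ) ≠ 0 := by positivity
  rw [lagC, lagC, h1, ← prod_shift_s18 α k N (by omega)]
  rw [Nat.factorial_succ]
  push_cast
  field_simp
  ring

lemma lagC_shift (α : ℝ) {N k : ℕ} (h : k < N) :
    lagC α N k = lagC (α + 1) N k - lagC (α + 1) (N - 1) k := by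
  have hA : ∏ i ∈ Finset.Icc (k + 1) N, (α + 1 + (i : ℝ)) =
      (α + 1 + N) * ∏ i ∈ Finset.Icc (k + 2) N, (α + (i : ℝ)) := by
    rw [icc_insert_top (by omega : k + 1 ≤ N),
      Finset.prod_insert (by simp only [Finset.mem_Icc]; omega),
      prod_shift_s18 α k N (by omega)]
  have hB : ∏ i ∈ Finset.Icc (k + 1) (N - 1), (α + 1 + (i : ℝ)) =
      ∏ i ∈ Finset.Icc (k + 2) N, (α + (i : ℝ)) := prod_shift_s18 α k N (by omega)
  have hL : ∏ i ∈ Finset.Icc (k + 1) N, (α + (i : ℝ)) =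
      (α + (k + 1)) * ∏ i ∈ Finset.Icc (k + 2) N, (α + (i : ℝ)) := by
    rw [icc_insert_bot (by omega : k + 1 ≤ N),
      Finset.prod_insert (by simp only [Finset.mem_Icc]; omega)]
    push_cast; ring
  have hfacn : Nat.factorial (N - k) = (N - k) * Nat.factorial (N - 1 - k) := by
    rw [show N - k = (N - 1 - k) + 1 by omega, Nat.factorial_succ]
  have h1 : N - k = N - 1 - k + 1 := by omega
  have hfac : (Nat.factorial (N - k) : ℝ) = ((N : ℝ) - k) * (Nat.factorial (N - 1 - k)) := by
    rw [hfacn]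
    push_cast
    rw [Nat.cast_sub h.le]
  have hfk : (Nat.factorial k : ℝ) ≠ 0 := by positivity
  have hf1 : (Nat.factorial (N - 1 - k) : ℝ) ≠ 0 := by positivity
  have hNk : (N : ℝ) - k ≠ 0 := by
    have : (k : ℝ) < N := by exact_mod_cast h
    linarith
  rw [lagC, lagC, lagC, hA, hB, hL, hfac]
  field_simp
  ring

lemma laguerre_shift (α : ℝ) {N : ℕ} (hN : 1 ≤ N) (x : ℝ) :
    laguerre α (N : ℤ) x = laguerre (α + 1) (N : ℤ) x - laguerre (α + 1) ((N : ℤ) - 1) x := by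
  rw [show (N : ℤ) - 1 = ((N - 1 : ℕ) : ℤ) by omega, laguerre_natCast, laguerre_natCast,
    laguerre_natCast, show (N - 1) + 1 = N by omega, Finset.sum_range_succ,
    Finset.sum_range_succ (f := fun k => lagC (α + 1) N k * x ^ k)]
  have htop : lagC α N N = lagC (α + 1) N N := by
    rw [lagC, lagC, Finset.Icc_eq_empty (by omega : ¬(N + 1 ≤ N))]
    simp
  rw [htop]
  have hsum : ∑ k ∈ Finset.range N, lagC α N k * x ^ k =
      ∑ k ∈ Finset.range N, (lagC (α + 1) N k * x ^ k - lagC (α + 1) (N - 1) k * x ^ k) := by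
    refine Finset.sum_congr rfl fun k hk => ?_
    rw [lagC_shift α (Finset.mem_range.mp hk)]
    ring
  rw [hsum, Finset.sum_sub_distrib]
  ring

lemma laguerre_hasDerivAt (α : ℝ) (n : ℤ) (x : ℝ) :
    HasDerivAt (fun y => laguerre α n y) (-laguerre (α + 1) (n - 1) x) x := by
  rcases lt_or_ge n 0 with h | h
  · simp only [laguerre_of_neg _ h, laguerre_of_neg _ (by omega : n - 1 < 0), neg_zero]
    exact hasDerivAt_const x 0
  · obtain ⟨N, rfl⟩ := Int.eq_ofNat_of_zero_le h
    have key : HasDerivAt (fun y => laguerre α (N : ℤ) y)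
        (∑ k ∈ Finset.range (N + 1), lagC α N k * ((k : ℝ) * x ^ (k - 1))) x := by
      have hrw : ∀ y, laguerre α (N : ℤ) y = ∑ k ∈ Finset.range (N + 1), lagC α N k * y ^ k :=
        fun y => laguerre_natCast α N y
      simp only [hrw]
      exact HasDerivAt.fun_sum fun k _ => (hasDerivAt_pow k x).const_mul _
    convert key using 1
    rcases Nat.eq_zero_or_pos N with rfl | hN
    · rw [laguerre_of_neg _ (by norm_num : ((0 : ℕ) : ℤ) - 1 < 0)]
      simp
    · rw [show (N : ℤ) - 1 = ((N - 1 : ℕ) : ℤ) by omega, laguerre_natCast,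
        show (N - 1) + 1 = N by omega,
        Finset.sum_range_succ' (fun k => lagC α N k * ((k : ℝ) * x ^ (k - 1))) N]
      simp only [Nat.cast_zero, zero_mul, mul_zero, add_zero]
      rw [← Finset.sum_neg_distrib]
      refine Finset.sum_congr rfl fun k hk => ?_
      have hd := lagC_deriv α (Finset.mem_range.mp hk)
      push_cast at hd ⊢
      linear_combination (-x ^ k) * hd

lemma expLag_hasDerivAt (α : ℝ) {m : ℕ} (hm : 1 ≤ m) (x : ℝ) :
    HasDerivAt (fun y => Real.exp y * laguerre α (m : ℤ) (-y))
      (Real.exp x * laguerre (α + 1) (m : ℤ) (-x)) x := by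
  have hcomp : HasDerivAt (fun y => laguerre α (m : ℤ) (-y))
      (laguerre (α + 1) ((m : ℤ) - 1) (-x)) x := by
    have h := (laguerre_hasDerivAt α m (-x)).comp x (hasDerivAt_neg x)
    simpa [Function.comp_def] using h
  have h := (Real.hasDerivAt_exp x).fun_mul hcomp
  refine h.congr_deriv ?_
  rw [laguerre_shift α hm (-x)]
  ring

/-- **Type I `X_m`-Laguerre polynomials via partitions.** For `m ≥ 1`, `n ≥ m`,
`L_{m,n}^{I,α}(x) = L_m^{(α)}(−x) L_{n−m}^{(α−1)}(x) + L_{n−m−1}^{(α)}(x) L_m^{(α−1)}(−x)`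
equals `−L_{∅,(m),n}^{(α−1)}(x)`. -/
theorem typeI_Xm_laguerre (m n : ℕ) (hm : 1 ≤ m) (hmn : m ≤ n) (α : ℝ) (x : ℝ) :
    laguerre α (m : ℤ) (-x) * laguerre (α - 1) ((n : ℤ) - m) x +
      laguerre α ((n : ℤ) - m - 1) x * laguerre (α - 1) (m : ℤ) (-x) =
    - excLagFun (α - 1) emptyPartition (constPartition m 1 hm) n x := by
  have hf0 : HasDerivAt (fun y => Real.exp y * laguerre (α - 1) (m : ℤ) (-y))
      (Real.exp x * laguerre α (m : ℤ) (-x)) x := by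
    have h := expLag_hasDerivAt (α - 1) hm x
    rwa [sub_add_cancel] at h
  have hf1 : HasDerivAt (fun y => laguerre (α - 1) ((n : ℤ) - m) y)
      (-laguerre α ((n : ℤ) - m - 1) x) x := by
    have h := laguerre_hasDerivAt (α - 1) ((n : ℤ) - m) x
    rwa [sub_add_cancel] at h
  rw [excLagFun, Wr]
  have hdet : ∀ M : Matrix (Fin (emptyPartition.len + (constPartition m 1 hm).len + 1))
      (Fin (emptyPartition.len + (constPartition m 1 hm).len + 1)) ℝ,
      M.det = M 0 0 * M 1 1 - M 0 1 * M 1 0 := fun M => Matrix.det_fin_two M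
  rw [hdet]
  simp only [Matrix.of_apply, Fin.val_one', show emptyPartition.len = 0 from rfl,
    show (constPartition m 1 hm).len = 1 from rfl]
  simp only [Matrix.of_apply, Fin.val_zero, Fin.val_one, iteratedDeriv_zero, iteratedDeriv_one,
    emptyPartition, constPartition, PartitionSeq.size, PartitionSeq.deg, Finset.range_zero,
    Finset.sum_empty, Finset.sum_range_one, Nat.cast_zero, Nat.cast_one, Nat.cast_ofNat]
  norm_num
  rw [hf0.deriv, hf1.deriv]
  rw [Real.exp_neg]
  field_simp
  ring
end
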